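/- arXiv:math/0604608 — 8 statements merged into one kernel-verified Lean document; each statement's English description precedes it below -/
import Mathlib

section
/- Let g be a real Lie algebra and ω : g → g* a skew-symmetric linear isomorphism. The endomorphism J_ω(x,α) = (-ω⁻¹(α), ω(x)) of the cotangent Lie algebra T*g satisfies the integrability condition N_{J_ω} ≡ 0 (with respect to the cotangent Lie bracket) if and only if ω([x,y]) = ω(x)∘ad(y) - ω(y)∘ad(x) for all x,y ∈ g, i.e. if and only if the 2-form (x,y) ↦ ω(x)(y) is a closed (symplectic) 2-form on g. -/
open LieAlgebra

/-- The cotangent Lie bracket on `g ⊕ g*`. -/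
def ctb {L : Type*} [LieRing L] [LieAlgebra ℝ L]
    (u v : L × Module.Dual ℝ L) : L × Module.Dual ℝ L :=
  (⁅u.1, v.1⁆, -(v.2.comp (ad ℝ L u.1)) + u.2.comp (ad ℝ L v.1))

/-- The Nijenhuis tensor of an endomorphism `J` of the cotangent Lie algebra. -/
def nij {L : Type*} [LieRing L] [LieAlgebra ℝ L]
    (J : L × Module.Dual ℝ L → L × Module.Dual ℝ L)
    (u v : L × Module.Dual ℝ L) : L × Module.Dual ℝ L :=
  ctb u v + J (ctb (J u) v) + J (ctb u (J v)) - ctb (J u) (J v)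

/-- The endomorphism `J_ω(x,α) = (-ω⁻¹(α), ω(x))` of `g ⊕ g*`. -/
noncomputable def Jom {L : Type*} [LieRing L] [LieAlgebra ℝ L]
    (ω : L ≃ₗ[ℝ] Module.Dual ℝ L) (u : L × Module.Dual ℝ L) :
    L × Module.Dual ℝ L := (-(ω.symm u.2), ω u.1)

lemma ad_neg' {L : Type*} [LieRing L] [LieAlgebra ℝ L] (a : L) :
    ad ℝ L (-a) = -ad ℝ L a := by ext z; simp

/-- For a skew-symmetric isomorphism `ω : g → g*`, the endomorphism `J_ω` is
integrable iff `ω([x,y]) = ω(x)∘ad(y) - ω(y)∘ad(x)`, iff the associated 2-form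
`Ω(x,y) = ω(x)(y)` is closed (i.e. symplectic). -/
theorem Jom_integrable_iff_symplectic
    (L : Type*) [LieRing L] [LieAlgebra ℝ L] [FiniteDimensional ℝ L]
    (ω : L ≃ₗ[ℝ] Module.Dual ℝ L)
    (hskew : ∀ x y : L, ω x y = -(ω y x)) :
    ((∀ u v : L × Module.Dual ℝ L, nij (Jom ω) u v = 0) ↔
      (∀ x y : L, ω ⁅x, y⁆ =
        (ω x).comp (ad ℝ L y) - (ω y).comp (ad ℝ L x))) ∧
    ((∀ u v : L × Module.Dual ℝ L, nij (Jom ω) u v = 0) ↔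
      (∀ x y z : L, ω ⁅x, y⁆ z + ω ⁅y, z⁆ x + ω ⁅z, x⁆ y = 0)) := by
  have main : (∀ u v : L × Module.Dual ℝ L, nij (Jom ω) u v = 0) ↔
      (∀ x y : L, ω ⁅x, y⁆ =
        (ω x).comp (ad ℝ L y) - (ω y).comp (ad ℝ L x)) := by
    constructor
    · intro h x b
      have h2 := congrArg Prod.snd (h (x, 0) (0, ω b))
      simp only [nij, ctb, Jom, map_zero, LinearEquiv.symm_apply_apply, neg_zero, lie_zero,
        zero_lie, LinearMap.zero_comp, LinearMap.comp_zero, add_zero, zero_add, neg_neg,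
        LinearMap.neg_comp, LinearMap.comp_neg, ad_neg', map_neg, lie_neg, neg_lie,
        Prod.mk_add_mk, Prod.mk_sub_mk, Prod.snd, Prod.snd_zero] at h2
      ext z
      have h3 := DFunLike.congr_fun h2 z
      simp only [LinearMap.add_apply, LinearMap.sub_apply, LinearMap.neg_apply,
        LinearMap.comp_apply, LinearMap.zero_apply, map_neg, ad_apply] at h3 ⊢
      linarith
    · intro hC u v
      obtain ⟨x, α⟩ := u
      obtain ⟨y, β⟩ := v
      obtain ⟨a, rfl⟩ : ∃ a, ω a = α := ⟨ω.symm α, ω.apply_symm_apply α⟩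
      obtain ⟨b, rfl⟩ : ∃ b, ω b = β := ⟨ω.symm β, ω.apply_symm_apply β⟩
      have hC' : ∀ x y : L, (ω x).comp (ad ℝ L y) = ω ⁅x, y⁆ + (ω y).comp (ad ℝ L x) := by
        intro x y; rw [hC x y]; abel
      simp only [nij, ctb, Jom, LinearEquiv.symm_apply_apply, ad_neg', map_neg, map_add, neg_neg,
        LinearMap.comp_neg, LinearMap.neg_comp, lie_neg, neg_lie, Prod.mk_add_mk, Prod.mk_sub_mk,
        Prod.mk_eq_zero, Prod.fst, Prod.snd]
      constructor
      · rw [hC' x y, hC' a b]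
        simp only [map_add, LinearEquiv.symm_apply_apply]
        abel
      · rw [hC a y, hC x b]
        abel
  have equiv : (∀ x y : L, ω ⁅x, y⁆ =
        (ω x).comp (ad ℝ L y) - (ω y).comp (ad ℝ L x)) ↔
      (∀ x y z : L, ω ⁅x, y⁆ z + ω ⁅y, z⁆ x + ω ⁅z, x⁆ y = 0) := by
    constructor
    · intro hC x y z
      have h1 := DFunLike.congr_fun (hC x y) z
      simp only [LinearMap.sub_apply, LinearMap.comp_apply, ad_apply] at h1
      have h2 := hskew x ⁅y, z⁆
      have h3 := hskew y ⁅z, x⁆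
      have h4 : ω y ⁅z, x⁆ = -(ω y ⁅x, z⁆) := by
        rw [← lie_skew x z, map_neg, neg_neg]
      linarith
    · intro hC x y
      ext z
      have h1 := hC x y z
      have h2 := hskew x ⁅y, z⁆
      have h3 := hskew y ⁅z, x⁆
      have h4 : ω y ⁅z, x⁆ = -(ω y ⁅x, z⁆) := by
        rw [← lie_skew x z, map_neg, neg_neg]
      simp only [LinearMap.sub_apply, LinearMap.comp_apply, ad_apply]
      linarith
  exact ⟨main, main.trans equiv⟩
end

section
/- Let g be a real Lie algebra and j : g → g an endomorphism with j² = -id. Define J_j on T*g = g ⊕ g* by J_j(x,α) = (j(x), -α∘j). Then J_j² = -id, J_j is orthogonal with respect to the standard bilinear form ⟨(x,α),(y,β)⟩ = (1/2)(β(x)+α(y)), and if j satisfies the integrability condition N_j ≡ 0 on g, then J_j satisfies N_{J_j} ≡ 0 on the cotangent Lie algebra T*g. -/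
open LieAlgebra

/-- The standard bilinear form `⟨(x,α),(y,β)⟩ = (1/2)(β(x) + α(y))`. -/
noncomputable def ctf {L : Type*} [LieRing L] [LieAlgebra ℝ L]
    (u v : L × Module.Dual ℝ L) : ℝ := (v.2 u.1 + u.2 v.1) / 2

/-- The endomorphism `J_j(x,α) = (j(x), -α∘j)` of `g ⊕ g*` induced by an almost
complex structure `j` on `g`. -/
def Jcx {L : Type*} [LieRing L] [LieAlgebra ℝ L]
    (j : L →ₗ[ℝ] L) (u : L × Module.Dual ℝ L) : L × Module.Dual ℝ L :=
  (j u.1, -(u.2.comp j))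

/-- For `j` with `j² = -id`, `J_j` squares to `-id`, is orthogonal for the
standard neutral form, and if `j` is integrable on `g` then `J_j` is integrable
on the cotangent Lie algebra. -/
theorem Jcx_hermitian
    (L : Type*) [LieRing L] [LieAlgebra ℝ L] [FiniteDimensional ℝ L]
    (j : L →ₗ[ℝ] L) (hj : ∀ x : L, j (j x) = -x) :
    (∀ u : L × Module.Dual ℝ L, Jcx j (Jcx j u) = -u) ∧
    (∀ u v : L × Module.Dual ℝ L, ctf (Jcx j u) (Jcx j v) = ctf u v) ∧
    ((∀ x y : L, ⁅x, y⁆ + j ⁅j x, y⁆ + j ⁅x, j y⁆ - ⁅j x, j y⁆ = 0) →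
      ∀ u v : L × Module.Dual ℝ L, nij (Jcx j) u v = 0) := by

  refine ⟨?_, ?_, ?_⟩
  · rintro ⟨x, α⟩
    refine Prod.ext ?_ ?_
    · simpa [Jcx] using hj x
    · ext z
      simp [Jcx, hj z]
  · rintro ⟨x, α⟩ ⟨y, β⟩
    simp [Jcx, ctf, hj]
  · intro h
    rintro ⟨x, α⟩ ⟨y, β⟩
    refine Prod.ext ?_ ?_
    · simpa [nij, ctb, Jcx] using h x y
    · ext z
      have h1 := congrArg α (h y z)
      have h2 := congrArg β (h x z)
      simp only [map_add, map_sub, map_zero] at h1 h2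
      simp [nij, ctb, Jcx, ad]
      linarith
end

section
/- Let g₆ be the 6-dimensional real Lie algebra with basis X₁,…,X₆ and nonzero brackets [X₁,X₂] = -X₅, [X₁,X₅] = -X₆ - μX₅, [X₃,X₄] = -X₆, where μ ≠ 0. Then every closed 2-form ω on g₆ is degenerate; in particular g₆ admits no symplectic structure. -/
/-- The 6-dimensional solvable Lie algebra `g₆` (basis `X₁,…,X₆` with
`[X₁,X₂]=-X₅`, `[X₁,X₅]=-X₆-μX₅`, `[X₃,X₄]=-X₆`, `μ ≠ 0`) admits no
symplectic structure: every closed 2-form on it is degenerate. -/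
theorem g6_no_symplectic_structure
    (L : Type*) [LieRing L] [LieAlgebra ℝ L] [FiniteDimensional ℝ L]
    (μ : ℝ) (hμ : μ ≠ 0) (b : Module.Basis (Fin 6) ℝ L)
    (h12 : ⁅b 0, b 1⁆ = -b 4)
    (h15 : ⁅b 0, b 4⁆ = -b 5 - μ • b 4)
    (h34 : ⁅b 2, b 3⁆ = -b 5)
    (hz : ∀ i j : Fin 6, i < j →
      (i, j) ≠ ((0 : Fin 6), (1 : Fin 6)) →
      (i, j) ≠ ((0 : Fin 6), (4 : Fin 6)) →
      (i, j) ≠ ((2 : Fin 6), (3 : Fin 6)) → ⁅b i, b j⁆ = 0)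
    (ω : L →ₗ[ℝ] L →ₗ[ℝ] ℝ)
    (hskew : ∀ x y : L, ω x y = -(ω y x))
    (hclosed : ∀ x y z : L, ω ⁅x, y⁆ z + ω ⁅y, z⁆ x + ω ⁅z, x⁆ y = 0) :
    ∃ x : L, x ≠ 0 ∧ ∀ y : L, ω x y = 0 := by
  have hself : ∀ x : L, ω x x = 0 := fun x => by have := hskew x x; linarith
  have z02 : ⁅b 0, b 2⁆ = 0 := hz 0 2 (by decide) (by decide) (by decide) (by decide)
  have z03 : ⁅b 0, b 3⁆ = 0 := hz 0 3 (by decide) (by decide) (by decide) (by decide)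
  have z05 : ⁅b 0, b 5⁆ = 0 := hz 0 5 (by decide) (by decide) (by decide) (by decide)
  have z12 : ⁅b 1, b 2⁆ = 0 := hz 1 2 (by decide) (by decide) (by decide) (by decide)
  have z13 : ⁅b 1, b 3⁆ = 0 := hz 1 3 (by decide) (by decide) (by decide) (by decide)
  have z14 : ⁅b 1, b 4⁆ = 0 := hz 1 4 (by decide) (by decide) (by decide) (by decide)
  have z15 : ⁅b 1, b 5⁆ = 0 := hz 1 5 (by decide) (by decide) (by decide) (by decide)
  have z24 : ⁅b 2, b 4⁆ = 0 := hz 2 4 (by decide) (by decide) (by decide) (by decide)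
  have z34 : ⁅b 3, b 4⁆ = 0 := hz 3 4 (by decide) (by decide) (by decide) (by decide)
  have rev : ∀ x y : L, ⁅x, y⁆ = 0 → ⁅y, x⁆ = 0 := by
    intro x y h
    rw [← lie_skew, h, neg_zero]
  -- ω(b4, b5) = 0  from triple (0,1,5)
  have e45 : ω (b 4) (b 5) = 0 := by
    have h := hclosed (b 0) (b 1) (b 5)
    rw [h12, z15, rev _ _ z05] at h
    simpa using h
  -- ω(b4, b2) = 0  from triple (0,1,2)
  have e42 : ω (b 4) (b 2) = 0 := by
    have h := hclosed (b 0) (b 1) (b 2)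
    rw [h12, z12, rev _ _ z02] at h
    simpa using h
  -- ω(b4, b3) = 0  from triple (0,1,3)
  have e43 : ω (b 4) (b 3) = 0 := by
    have h := hclosed (b 0) (b 1) (b 3)
    rw [h12, z13, rev _ _ z03] at h
    simpa using h
  -- ω(b5, b2) = 0  from triple (0,4,2)
  have e52 : ω (b 5) (b 2) = 0 := by
    have h := hclosed (b 0) (b 4) (b 2)
    rw [h15, rev _ _ z24, rev _ _ z02] at h
    simp [map_sub, map_neg, map_smul, smul_eq_mul] at h
    rw [e42] at h; linarith
  -- ω(b5, b3) = 0  from triple (0,4,3)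
  have e53 : ω (b 5) (b 3) = 0 := by
    have h := hclosed (b 0) (b 4) (b 3)
    rw [h15, rev _ _ z34, rev _ _ z03] at h
    simp [map_sub, map_neg, map_smul, smul_eq_mul] at h
    rw [e43] at h; linarith
  -- ω(b5, b0) = 0  from triple (2,3,0)
  have e50 : ω (b 5) (b 0) = 0 := by
    have h := hclosed (b 2) (b 3) (b 0)
    rw [h34, rev _ _ z03, z02] at h
    simpa using h
  -- ω(b5, b1) = 0  from triple (2,3,1)
  have e51 : ω (b 5) (b 1) = 0 := by
    have h := hclosed (b 2) (b 3) (b 1)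
    rw [h34, rev _ _ z13, z12] at h
    simpa using h
  -- ω(b5, b4) = 0  from triple (2,3,4)
  have e54 : ω (b 5) (b 4) = 0 := by
    have h := hclosed (b 2) (b 3) (b 4)
    rw [h34, z34, rev _ _ z24] at h
    simpa using h
  have hω : ω (b 5) = 0 := by
    apply b.ext
    intro i
    fin_cases i
    · simpa using e50
    · simpa using e51
    · simpa using e52
    · simpa using e53
    · simpa using e54
    · simpa using hself (b 5)
  exact ⟨b 5, b.ne_zero 5, fun y => by rw [hω]; simp⟩
end

section
/- Let g₆ be the 6-dimensional real Lie algebra with basis X₁,…,X₆ and nonzero brackets [X₁,X₂] = -X₅, [X₁,X₅] = -X₆ - μX₅, [X₃,X₄] = -X₆, where μ ≠ 0. Then g₆ admits no complex structure: there is no linear endomorphism J of g₆ with J² = -id and N_J ≡ 0. -/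
set_option maxHeartbeats 2000000 in
/-- The 6-dimensional solvable Lie algebra `g₆` (basis `X₁,…,X₆` with
`[X₁,X₂]=-X₅`, `[X₁,X₅]=-X₆-μX₅`, `[X₃,X₄]=-X₆`, `μ ≠ 0`) admits no
complex structure. -/
theorem g6_no_complex_structure
    (L : Type*) [LieRing L] [LieAlgebra ℝ L] [FiniteDimensional ℝ L]
    (μ : ℝ) (hμ : μ ≠ 0) (b : Module.Basis (Fin 6) ℝ L)
    (h12 : ⁅b 0, b 1⁆ = -b 4)
    (h15 : ⁅b 0, b 4⁆ = -b 5 - μ • b 4)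
    (h34 : ⁅b 2, b 3⁆ = -b 5)
    (hz : ∀ i j : Fin 6, i < j →
      (i, j) ≠ ((0 : Fin 6), (1 : Fin 6)) →
      (i, j) ≠ ((0 : Fin 6), (4 : Fin 6)) →
      (i, j) ≠ ((2 : Fin 6), (3 : Fin 6)) → ⁅b i, b j⁆ = 0) :
    ¬ ∃ J : L →ₗ[ℝ] L, (∀ x : L, J (J x) = -x) ∧
      (∀ x y : L, ⁅x, y⁆ + J ⁅J x, y⁆ + J ⁅x, J y⁆ - ⁅J x, J y⁆ = 0) := by
  rintro ⟨J, hJ2, hN⟩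
  -- the full bracket table
  have sk : ∀ x y : L, ⁅y, x⁆ = -⁅x, y⁆ := fun x y => by rw [← lie_skew]
  have z02 := hz 0 2 (by decide) (by decide) (by decide) (by decide)
  have z03 := hz 0 3 (by decide) (by decide) (by decide) (by decide)
  have z05 := hz 0 5 (by decide) (by decide) (by decide) (by decide)
  have z12 := hz 1 2 (by decide) (by decide) (by decide) (by decide)
  have z13 := hz 1 3 (by decide) (by decide) (by decide) (by decide)
  have z14 := hz 1 4 (by decide) (by decide) (by decide) (by decide)
  have z15 := hz 1 5 (by decide) (by decide) (by decide) (by decide)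
  have z24 := hz 2 4 (by decide) (by decide) (by decide) (by decide)
  have z25 := hz 2 5 (by decide) (by decide) (by decide) (by decide)
  have z35 := hz 3 5 (by decide) (by decide) (by decide) (by decide)
  have z45 := hz 4 5 (by decide) (by decide) (by decide) (by decide)
  have z34 := hz 3 4 (by decide) (by decide) (by decide) (by decide)
  have s10 : ⁅b 1, b 0⁆ = -(-b 4 : L) := by rw [sk, h12]
  have s40 : ⁅b 4, b 0⁆ = -(-b 5 - μ • b 4 : L) := by rw [sk, h15]
  have s32 : ⁅b 3, b 2⁆ = -(-b 5 : L) := by rw [sk, h34]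
  have s20 : ⁅b 2, b 0⁆ = (0:L) := by rw [sk, z02, neg_zero]
  have s30 : ⁅b 3, b 0⁆ = (0:L) := by rw [sk, z03, neg_zero]
  have s50 : ⁅b 5, b 0⁆ = (0:L) := by rw [sk, z05, neg_zero]
  have s21 : ⁅b 2, b 1⁆ = (0:L) := by rw [sk, z12, neg_zero]
  have s31 : ⁅b 3, b 1⁆ = (0:L) := by rw [sk, z13, neg_zero]
  have s41 : ⁅b 4, b 1⁆ = (0:L) := by rw [sk, z14, neg_zero]
  have s51 : ⁅b 5, b 1⁆ = (0:L) := by rw [sk, z15, neg_zero]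
  have s42 : ⁅b 4, b 2⁆ = (0:L) := by rw [sk, z24, neg_zero]
  have s52 : ⁅b 5, b 2⁆ = (0:L) := by rw [sk, z25, neg_zero]
  have s53 : ⁅b 5, b 3⁆ = (0:L) := by rw [sk, z35, neg_zero]
  have s54 : ⁅b 5, b 4⁆ = (0:L) := by rw [sk, z45, neg_zero]
  have s43 : ⁅b 4, b 3⁆ = (0:L) := by rw [sk, z34, neg_zero]
  -- the bracket in coordinates
  have hbr : ∀ x y : L, ⁅x, y⁆ =
      (-(b.repr x 0 * b.repr y 1 - b.repr x 1 * b.repr y 0)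
        - μ * (b.repr x 0 * b.repr y 4 - b.repr x 4 * b.repr y 0)) • b 4 +
      (-(b.repr x 0 * b.repr y 4 - b.repr x 4 * b.repr y 0)
        - (b.repr x 2 * b.repr y 3 - b.repr x 3 * b.repr y 2)) • b 5 := by
    intro x y
    conv_lhs => rw [← b.sum_repr x, ← b.sum_repr y]
    rw [Fin.sum_univ_six, Fin.sum_univ_six]
    simp only [add_lie, lie_add, smul_lie, lie_smul, lie_self,
      h12, h15, h34, z02, z03, z05, z12, z13, z14, z15, z24, z25, z35, z45, z34,
      s10, s40, s32, s20, s30, s50, s21, s31, s41, s51, s42, s52, s53, s54, s43,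
      smul_zero, zero_add, add_zero, neg_neg, smul_neg]
    module
  -- coordinates of basis vectors
  have rb : ∀ i j : Fin 6, b.repr (b i) j = if i = j then 1 else 0 := by
    intro i j; rw [b.repr_self]; exact Finsupp.single_apply
  -- coordinates of J
  have hJc : ∀ (x : L) (i : Fin 6), b.repr (J x) i = ∑ j, b.repr (J (b j)) i * b.repr x j := by
    intro x i
    conv_lhs => rw [← b.sum_repr x]
    simp only [map_sum, map_smul, Finsupp.coe_finset_sum, Finset.sum_apply,
      Finsupp.smul_apply, smul_eq_mul]
    exact Finset.sum_congr rfl fun j _ => mul_comm _ _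
  -- b 5 is central
  have hc : ∀ y : L, ⁅b 5, y⁆ = 0 := by
    intro y
    rw [hbr]
    simp [rb]
  -- the key consequence of integrability applied to the central vector b 5
  have hstar : ∀ y : L, ⁅J (b 5), J y⁆ = J ⁅J (b 5), y⁆ := by
    intro y
    have h := hN (b 5) y
    rw [hc y, hc (J y), map_zero, zero_add, add_zero, sub_eq_zero] at h
    exact h.symm
  -- coordinates 3, 2, 0 of J (b 5) vanish
  have H23 := congrArg (fun v => b.repr v 3) (hstar (b 2))
  simp only [hbr, map_add, map_smul, Finsupp.add_apply, Finsupp.smul_apply, smul_eq_mul, rb,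
    Fin.reduceEq, reduceIte] at H23
  ring_nf at H23
  have ha3 : b.repr (J (b 5)) 3 = 0 := by nlinarith [H23, sq_nonneg (b.repr (J (b 5)) 3)]
  have H32 := congrArg (fun v => b.repr v 2) (hstar (b 3))
  simp only [hbr, map_add, map_smul, Finsupp.add_apply, Finsupp.smul_apply, smul_eq_mul, rb,
    Fin.reduceEq, reduceIte, ha3] at H32
  ring_nf at H32
  have ha2 : b.repr (J (b 5)) 2 = 0 := by nlinarith [H32, sq_nonneg (b.repr (J (b 5)) 2)]
  have H10 := congrArg (fun v => b.repr v 0) (hstar (b 1))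
  simp only [hbr, map_add, map_smul, Finsupp.add_apply, Finsupp.smul_apply, smul_eq_mul, rb,
    Fin.reduceEq, reduceIte, ha3] at H10
  ring_nf at H10
  have H40 := congrArg (fun v => b.repr v 0) (hstar (b 4))
  simp only [hbr, map_add, map_smul, Finsupp.add_apply, Finsupp.smul_apply, smul_eq_mul, rb,
    Fin.reduceEq, reduceIte, ha3] at H40
  ring_nf at H40
  have ha0 : b.repr (J (b 5)) 0 = 0 := by
    have h1 : b.repr (J (b 5)) 0 * b.repr (J (b 4)) 0 = 0 := by linarith
    have h2 : b.repr (J (b 5)) 0 * b.repr (J (b 4)) 0 * μ = 0 := by rw [h1, zero_mul]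
    nlinarith [H40, h2, sq_nonneg (b.repr (J (b 5)) 0)]
  by_cases ha4 : b.repr (J (b 5)) 4 = 0
  · by_cases ha1 : b.repr (J (b 5)) 1 = 0
    · -- J (b 5) = a₅ • b 5, contradicting J² = -1
      have HJ : b.repr (J (J (b 5))) 5 = b.repr (-(b 5)) 5 :=
        congrArg (fun v => b.repr v 5) (hJ2 (b 5))
      rw [hJc] at HJ
      rw [Fin.sum_univ_six] at HJ
      simp only [ha0, ha1, ha2, ha3, ha4, map_neg, Finsupp.neg_apply, rb, Fin.reduceEq,
        reduceIte, mul_zero, add_zero, zero_add] at HJ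
      nlinarith [HJ, sq_nonneg (b.repr (J (b 5)) 5)]
    · -- J (b 4) is proportional to b 4, contradicting J² = -1
      have HB : ∀ i : Fin 6, b.repr ⁅J (b 5), J (b 0)⁆ i = b.repr (J ⁅J (b 5), b 0⁆) i :=
        fun i => congrArg (fun v => b.repr v i) (hstar (b 0))
      have B0 := HB 0; have B1 := HB 1; have B2 := HB 2; have B3 := HB 3; have B5 := HB 5
      simp only [hbr, map_add, map_smul, Finsupp.add_apply, Finsupp.smul_apply, smul_eq_mul, rb,
        Fin.reduceEq, reduceIte, ha0, ha2, ha3, ha4] at B0 B1 B2 B3 B5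
      ring_nf at B0 B1 B2 B3 B5
      have c0 : b.repr (J (b 4)) 0 = 0 := by
        have h : b.repr (J (b 5)) 1 * b.repr (J (b 4)) 0 = 0 := by linarith
        exact (mul_eq_zero.mp h).resolve_left ha1
      have c1 : b.repr (J (b 4)) 1 = 0 := by
        have h : b.repr (J (b 5)) 1 * b.repr (J (b 4)) 1 = 0 := by linarith
        exact (mul_eq_zero.mp h).resolve_left ha1
      have c2 : b.repr (J (b 4)) 2 = 0 := by
        have h : b.repr (J (b 5)) 1 * b.repr (J (b 4)) 2 = 0 := by linarith
        exact (mul_eq_zero.mp h).resolve_left ha1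
      have c3 : b.repr (J (b 4)) 3 = 0 := by
        have h : b.repr (J (b 5)) 1 * b.repr (J (b 4)) 3 = 0 := by linarith
        exact (mul_eq_zero.mp h).resolve_left ha1
      have c5 : b.repr (J (b 4)) 5 = 0 := by
        have h : b.repr (J (b 5)) 1 * b.repr (J (b 4)) 5 = 0 := by linarith
        exact (mul_eq_zero.mp h).resolve_left ha1
      have HJ : b.repr (J (J (b 4))) 4 = b.repr (-(b 4)) 4 :=
        congrArg (fun v => b.repr v 4) (hJ2 (b 4))
      rw [hJc] at HJ
      rw [Fin.sum_univ_six] at HJ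
      simp only [c0, c1, c2, c3, c5, map_neg, Finsupp.neg_apply, rb, Fin.reduceEq,
        reduceIte, mul_zero, zero_mul, add_zero, zero_add] at HJ
      nlinarith [HJ, sq_nonneg (b.repr (J (b 4)) 4)]
  · -- the first coordinate of every J (b i) vanishes, contradicting J² = -1 on b 0
    have HA : ∀ (k : Fin 6), b.repr ⁅J (b 5), J (b k)⁆ 5 = b.repr (J ⁅J (b 5), b k⁆) 5 :=
      fun k => congrArg (fun v => b.repr v 5) (hstar (b k))
    have A1 := HA 1; have A2 := HA 2; have A3 := HA 3; have A4 := HA 4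
    simp only [hbr, map_add, map_smul, Finsupp.add_apply, Finsupp.smul_apply, smul_eq_mul, rb,
      Fin.reduceEq, reduceIte, ha0, ha2, ha3] at A1 A2 A3 A4
    ring_nf at A1 A2 A3 A4
    have c1 : b.repr (J (b 1)) 0 = 0 := by
      have h : b.repr (J (b 1)) 0 * b.repr (J (b 5)) 4 = 0 := by linarith
      exact (mul_eq_zero.mp h).resolve_right ha4
    have c2 : b.repr (J (b 2)) 0 = 0 := by
      have h : b.repr (J (b 2)) 0 * b.repr (J (b 5)) 4 = 0 := by linarith
      exact (mul_eq_zero.mp h).resolve_right ha4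
    have c3 : b.repr (J (b 3)) 0 = 0 := by
      have h : b.repr (J (b 3)) 0 * b.repr (J (b 5)) 4 = 0 := by linarith
      exact (mul_eq_zero.mp h).resolve_right ha4
    have c4 : b.repr (J (b 4)) 0 = 0 := by
      have h : b.repr (J (b 4)) 0 * b.repr (J (b 5)) 4 = 0 := by linarith
      exact (mul_eq_zero.mp h).resolve_right ha4
    have HJ : b.repr (J (J (b 0))) 0 = b.repr (-(b 0)) 0 :=
      congrArg (fun v => b.repr v 0) (hJ2 (b 0))
    rw [hJc] at HJ
    rw [Fin.sum_univ_six] at HJ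
    simp only [c1, c2, c3, c4, ha0, map_neg, Finsupp.neg_apply, rb, Fin.reduceEq,
      reduceIte, mul_zero, zero_mul, add_zero, zero_add] at HJ
    nlinarith [HJ, sq_nonneg (b.repr (J (b 0)) 0)]
end

section
/- Let g = ℝ × r₃ be the 4-dimensional solvable Lie algebra with basis e₀,e₁,e₂,e₃ and nonzero brackets [e₁,e₂] = e₂, [e₁,e₃] = e₂ + e₃. Then the cotangent Lie algebra T*g admits no hermitian structure with respect to the standard neutral bilinear form: there is no endomorphism J of g ⊕ g* with J² = -id, ⟨Ju,Jv⟩ = ⟨u,v⟩, and N_J ≡ 0. Equivalently, ℝ × r₃ admits no generalized complex structure. -/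
open LieAlgebra

section Infra
variable {L : Type*} [LieRing L] [LieAlgebra ℝ L] (b : Module.Basis (Fin 4) ℝ L)

/-- basis vectors of the first factor -/
noncomputable def EE (i : Fin 4) : L × Module.Dual ℝ L := (b i, 0)
/-- basis vectors of the second factor -/
noncomputable def FF (i : Fin 4) : L × Module.Dual ℝ L := (0, b.coord i)
/-- coordinates on the first factor -/
noncomputable def PP (i : Fin 4) (u : L × Module.Dual ℝ L) : ℝ := b.repr u.1 i
/-- coordinates on the second factor -/
noncomputable def QQ (i : Fin 4) (u : L × Module.Dual ℝ L) : ℝ := u.2 (b i)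

@[simp] lemma PP_add (i : Fin 4) (u v : L × Module.Dual ℝ L) :
    PP b i (u + v) = PP b i u + PP b i v := by simp [PP]
@[simp] lemma PP_smul (i : Fin 4) (r : ℝ) (u : L × Module.Dual ℝ L) :
    PP b i (r • u) = r * PP b i u := by simp [PP]
@[simp] lemma PP_neg (i : Fin 4) (u : L × Module.Dual ℝ L) :
    PP b i (-u) = -PP b i u := by simp [PP]
@[simp] lemma PP_sub (i : Fin 4) (u v : L × Module.Dual ℝ L) :
    PP b i (u - v) = PP b i u - PP b i v := by simp [PP, sub_eq_add_neg]
@[simp] lemma PP_zero (i : Fin 4) : PP b i (0 : L × Module.Dual ℝ L) = 0 := by simp [PP]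
@[simp] lemma QQ_add (i : Fin 4) (u v : L × Module.Dual ℝ L) :
    QQ b i (u + v) = QQ b i u + QQ b i v := by simp [QQ]
@[simp] lemma QQ_smul (i : Fin 4) (r : ℝ) (u : L × Module.Dual ℝ L) :
    QQ b i (r • u) = r * QQ b i u := by simp [QQ]
@[simp] lemma QQ_neg (i : Fin 4) (u : L × Module.Dual ℝ L) :
    QQ b i (-u) = -QQ b i u := by simp [QQ]
@[simp] lemma QQ_sub (i : Fin 4) (u v : L × Module.Dual ℝ L) :
    QQ b i (u - v) = QQ b i u - QQ b i v := by simp [QQ, sub_eq_add_neg]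
@[simp] lemma QQ_zero (i : Fin 4) : QQ b i (0 : L × Module.Dual ℝ L) = 0 := by simp [QQ]

@[simp] lemma PP_E (i j : Fin 4) : PP b i (EE b j) = if j = i then 1 else 0 := by
  simp [PP, EE, Module.Basis.repr_self, Finsupp.single_apply]
@[simp] lemma PP_F (i j : Fin 4) : PP b i (FF b j) = 0 := by simp [PP, FF]
@[simp] lemma QQ_E (i j : Fin 4) : QQ b i (EE b j) = 0 := by simp [QQ, EE]
@[simp] lemma QQ_F (i j : Fin 4) : QQ b i (FF b j) = if i = j then 1 else 0 := by
  simp [QQ, FF, Module.Basis.coord_apply, Module.Basis.repr_self, Finsupp.single_apply]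

lemma ext8 {u v : L × Module.Dual ℝ L} (h : ∀ i, PP b i u = PP b i v)
    (h' : ∀ i, QQ b i u = QQ b i v) : u = v := by
  refine Prod.ext ?_ ?_
  · exact b.ext_elem h
  · exact b.ext h'
end Infra
section Formulas
variable {L : Type*} [LieRing L] [LieAlgebra ℝ L] (b : Module.Basis (Fin 4) ℝ L)
variable (h12 : ⁅b 1, b 2⁆ = b 2) (h13 : ⁅b 1, b 3⁆ = b 2 + b 3)
variable (hz : ∀ i j : Fin 4, i < j →
      (i, j) ≠ ((1 : Fin 4), (2 : Fin 4)) →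
      (i, j) ≠ ((1 : Fin 4), (3 : Fin 4)) → ⁅b i, b j⁆ = 0)

include h12 h13 hz in
lemma lie_ex (x y : L) :
    ⁅x, y⁆ = (b.repr x 1 * b.repr y 2 - b.repr x 2 * b.repr y 1
        + b.repr x 1 * b.repr y 3 - b.repr x 3 * b.repr y 1) • b 2
      + (b.repr x 1 * b.repr y 3 - b.repr x 3 * b.repr y 1) • b 3 := by
  have t01 : ⁅b 0, b 1⁆ = 0 := hz 0 1 (by decide) (by decide) (by decide)
  have t02 : ⁅b 0, b 2⁆ = 0 := hz 0 2 (by decide) (by decide) (by decide)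
  have t03 : ⁅b 0, b 3⁆ = 0 := hz 0 3 (by decide) (by decide) (by decide)
  have t23 : ⁅b 2, b 3⁆ = 0 := hz 2 3 (by decide) (by decide) (by decide)
  have t10 : ⁅b 1, b 0⁆ = 0 := by rw [← lie_skew, t01]; simp
  have t20 : ⁅b 2, b 0⁆ = 0 := by rw [← lie_skew, t02]; simp
  have t30 : ⁅b 3, b 0⁆ = 0 := by rw [← lie_skew, t03]; simp
  have t32 : ⁅b 3, b 2⁆ = 0 := by rw [← lie_skew, t23]; simp
  have t21 : ⁅b 2, b 1⁆ = -b 2 := by rw [← lie_skew, h12]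
  have t31 : ⁅b 3, b 1⁆ = -(b 2 + b 3) := by rw [← lie_skew, h13]
  conv_lhs => rw [← b.sum_repr x, ← b.sum_repr y]
  rw [Fin.sum_univ_four, Fin.sum_univ_four]
  simp only [add_lie, lie_add, smul_lie, lie_smul, lie_self, t01, t02, t03, t23,
    t10, t20, t30, t32, t21, t31, h12, h13, smul_zero, zero_add, add_zero, smul_neg,
    smul_add]
  module

end Formulas
section Formulas2
variable {L : Type*} [LieRing L] [LieAlgebra ℝ L] (b : Module.Basis (Fin 4) ℝ L)
variable (h12 : ⁅b 1, b 2⁆ = b 2) (h13 : ⁅b 1, b 3⁆ = b 2 + b 3)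
variable (hz : ∀ i j : Fin 4, i < j →
      (i, j) ≠ ((1 : Fin 4), (2 : Fin 4)) →
      (i, j) ≠ ((1 : Fin 4), (3 : Fin 4)) → ⁅b i, b j⁆ = 0)

include h12 h13 hz

lemma P0_ctb (u v : L × Module.Dual ℝ L) : PP b 0 (ctb u v) = 0 := by
  simp only [PP, ctb]
  rw [lie_ex b h12 h13 hz]
  simp [Module.Basis.repr_self, Finsupp.single_apply]

lemma P1_ctb (u v : L × Module.Dual ℝ L) : PP b 1 (ctb u v) = 0 := by
  simp only [PP, ctb]
  rw [lie_ex b h12 h13 hz]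
  simp [Module.Basis.repr_self, Finsupp.single_apply]

lemma P2_ctb (u v : L × Module.Dual ℝ L) : PP b 2 (ctb u v) =
    PP b 1 u * PP b 2 v - PP b 2 u * PP b 1 v
      + PP b 1 u * PP b 3 v - PP b 3 u * PP b 1 v := by
  simp only [PP, ctb]
  rw [lie_ex b h12 h13 hz]
  simp [Module.Basis.repr_self, Finsupp.single_apply]

lemma P3_ctb (u v : L × Module.Dual ℝ L) : PP b 3 (ctb u v) =
    PP b 1 u * PP b 3 v - PP b 3 u * PP b 1 v := by
  simp only [PP, ctb]
  rw [lie_ex b h12 h13 hz]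
  simp [Module.Basis.repr_self, Finsupp.single_apply]

lemma Q0_ctb (u v : L × Module.Dual ℝ L) : QQ b 0 (ctb u v) = 0 := by
  simp only [QQ, ctb, LinearMap.add_apply, LinearMap.neg_apply, LinearMap.comp_apply,
    ad_apply]
  rw [lie_ex b h12 h13 hz u.1 (b 0), lie_ex b h12 h13 hz v.1 (b 0)]
  simp [Module.Basis.repr_self, Finsupp.single_apply]

lemma Q1_ctb (u v : L × Module.Dual ℝ L) : QQ b 1 (ctb u v) =
    (PP b 2 u + PP b 3 u) * QQ b 2 v + PP b 3 u * QQ b 3 v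
      - (PP b 2 v + PP b 3 v) * QQ b 2 u - PP b 3 v * QQ b 3 u := by
  simp only [QQ, PP, ctb, LinearMap.add_apply, LinearMap.neg_apply, LinearMap.comp_apply,
    ad_apply]
  rw [lie_ex b h12 h13 hz u.1 (b 1), lie_ex b h12 h13 hz v.1 (b 1)]
  simp [Module.Basis.repr_self, Finsupp.single_apply, map_add, map_smul, smul_eq_mul]
  ring

lemma Q2_ctb (u v : L × Module.Dual ℝ L) : QQ b 2 (ctb u v) =
    -(PP b 1 u * QQ b 2 v) + PP b 1 v * QQ b 2 u := by
  simp only [QQ, PP, ctb, LinearMap.add_apply, LinearMap.neg_apply, LinearMap.comp_apply,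
    ad_apply]
  rw [lie_ex b h12 h13 hz u.1 (b 2), lie_ex b h12 h13 hz v.1 (b 2)]
  simp [Module.Basis.repr_self, Finsupp.single_apply, map_add, map_smul, smul_eq_mul]

lemma Q3_ctb (u v : L × Module.Dual ℝ L) : QQ b 3 (ctb u v) =
    -(PP b 1 u * (QQ b 2 v + QQ b 3 v)) + PP b 1 v * (QQ b 2 u + QQ b 3 u) := by
  simp only [QQ, PP, ctb, LinearMap.add_apply, LinearMap.neg_apply, LinearMap.comp_apply,
    ad_apply]
  rw [lie_ex b h12 h13 hz u.1 (b 3), lie_ex b h12 h13 hz v.1 (b 3)]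
  simp [Module.Basis.repr_self, Finsupp.single_apply, map_add, map_smul, smul_eq_mul]
  ring

end Formulas2

section Formulas3
variable {L : Type*} [LieRing L] [LieAlgebra ℝ L] (b : Module.Basis (Fin 4) ℝ L)

lemma ctf_eq (u v : L × Module.Dual ℝ L) : ctf u v =
    (PP b 0 u * QQ b 0 v + PP b 1 u * QQ b 1 v + PP b 2 u * QQ b 2 v + PP b 3 u * QQ b 3 v
      + PP b 0 v * QQ b 0 u + PP b 1 v * QQ b 1 u + PP b 2 v * QQ b 2 u
      + PP b 3 v * QQ b 3 u) / 2 := by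
  have key : ∀ (φ : Module.Dual ℝ L) (x : L),
      φ x = b.repr x 0 * φ (b 0) + b.repr x 1 * φ (b 1) + b.repr x 2 * φ (b 2)
        + b.repr x 3 * φ (b 3) := by
    intro φ x
    conv_lhs => rw [← b.sum_repr x]
    rw [Fin.sum_univ_four]
    simp [smul_eq_mul]
  simp only [ctf, PP, QQ]
  rw [key v.2 u.1, key u.2 v.1]
  ring
end Formulas3
section Infra2
variable {L : Type*} [LieRing L] [LieAlgebra ℝ L] (b : Module.Basis (Fin 4) ℝ L)

lemma ext8' {u v : L × Module.Dual ℝ L}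
    (h0 : PP b 0 u = PP b 0 v) (h1 : PP b 1 u = PP b 1 v)
    (h2 : PP b 2 u = PP b 2 v) (h3 : PP b 3 u = PP b 3 v)
    (h4 : QQ b 0 u = QQ b 0 v) (h5 : QQ b 1 u = QQ b 1 v)
    (h6 : QQ b 2 u = QQ b 2 v) (h7 : QQ b 3 u = QQ b 3 v) : u = v := by
  refine ext8 b (fun i => ?_) (fun i => ?_) <;> fin_cases i <;> assumption
end Infra2

lemma realCases (m n A2 A3 B2 B3 : ℝ)
    (e1 : (1+m*m)*(A2+A3) = n*A2)
    (e2 : (1+m*m)*A3 = n*A3)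
    (e3 : (1+m*m)*B2 + n*B2 = 0)
    (e4 : (1+m*m)*(B2+B3) + n*B3 = 0) :
    A3 = 0 ∧ B2 = 0 ∧ (A2 = 0 ∨ B3 = 0) := by
  have hk : (0:ℝ) < 1 + m*m := by nlinarith
  have hA3 : A3 = 0 := by
    by_contra h3
    have hn : n = 1 + m*m := by
      have h : A3 * (n - (1+m*m)) = 0 := by linear_combination -e2
      rcases mul_eq_zero.mp h with h | h
      · exact absurd h h3
      · linarith
    have hb2 : B2 = 0 := by
      have h : B2 * ((1+m*m) + n) = 0 := by linear_combination e3
      rcases mul_eq_zero.mp h with h | h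
      · exact h
      · nlinarith
    have hb3 : B3 = 0 := by
      have h : B3 * ((1+m*m) + n) = 0 := by linear_combination e4 - (1+m*m) * hb2
      rcases mul_eq_zero.mp h with h | h
      · exact h
      · nlinarith
    have h : (1+m*m) * A3 = 0 := by
      rw [hn] at e1; linear_combination e1
    rcases mul_eq_zero.mp h with h | h
    · nlinarith
    · exact absurd h h3
  have hB2 : B2 = 0 := by
    by_contra hb
    have hn : n = -(1 + m*m) := by
      have h : B2 * ((1+m*m) + n) = 0 := by linear_combination e3
      rcases mul_eq_zero.mp h with h | h
      · exact absurd h hb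
      · linarith
    have hA2 : A2 = 0 := by
      have h : A2 * ((1+m*m) - n) = 0 := by linear_combination e1 - (1+m*m) * hA3
      rcases mul_eq_zero.mp h with h | h
      · exact h
      · nlinarith
    have h : (1+m*m) * B2 = 0 := by
      rw [hn] at e4; linear_combination e4
    rcases mul_eq_zero.mp h with h | h
    · nlinarith
    · exact absurd h hb
  refine ⟨hA3, hB2, ?_⟩
  by_contra hcon
  push_neg at hcon
  obtain ⟨h2, h3⟩ := hcon
  have hn1 : n = 1 + m*m := by
    have h : A2 * (n - (1+m*m)) = 0 := by linear_combination -e1 + (1+m*m)*hA3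
    rcases mul_eq_zero.mp h with h | h
    · exact absurd h h2
    · linarith
  have hn2 : n = -(1 + m*m) := by
    have h : B3 * (n + (1+m*m)) = 0 := by linear_combination e4 - (1+m*m)*hB2
    rcases mul_eq_zero.mp h with h | h
    · exact absurd h h3
    · linarith
  nlinarith

set_option maxHeartbeats 4000000

/-- The Lie algebra `ℝ × r₃` (`[e₁,e₂]=e₂`, `[e₁,e₃]=e₂+e₃`) admits no
generalized complex structure: its cotangent Lie algebra carries no hermitian
structure with respect to the standard neutral form. -/
theorem R_times_r3_no_generalized_complex_structure
    (L : Type*) [LieRing L] [LieAlgebra ℝ L] [FiniteDimensional ℝ L]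
    (b : Module.Basis (Fin 4) ℝ L)
    (h12 : ⁅b 1, b 2⁆ = b 2) (h13 : ⁅b 1, b 3⁆ = b 2 + b 3)
    (hz : ∀ i j : Fin 4, i < j →
      (i, j) ≠ ((1 : Fin 4), (2 : Fin 4)) →
      (i, j) ≠ ((1 : Fin 4), (3 : Fin 4)) → ⁅b i, b j⁆ = 0) :
    ¬ ∃ J : L × Module.Dual ℝ L →ₗ[ℝ] L × Module.Dual ℝ L,
      (∀ u, J (J u) = -u) ∧
      (∀ u v, ctf (J u) (J v) = ctf u v) ∧
      (∀ u v, nij (J ·) u v = 0) := by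
  rintro ⟨J, hJ2, hH, hN⟩
  have SP0 := P0_ctb b h12 h13 hz
  have SP1 := P1_ctb b h12 h13 hz
  have SP2 := P2_ctb b h12 h13 hz
  have SP3 := P3_ctb b h12 h13 hz
  have SQ0 := Q0_ctb b h12 h13 hz
  have SQ1 := Q1_ctb b h12 h13 hz
  have SQ2 := Q2_ctb b h12 h13 hz
  have SQ3 := Q3_ctb b h12 h13 hz
  -- central elements annihilate the bracket
  have hcent : ∀ z : L × Module.Dual ℝ L, PP b 1 z = 0 → PP b 2 z = 0 → PP b 3 z = 0 →
      QQ b 2 z = 0 → QQ b 3 z = 0 → ∀ v, ctb z v = 0 ∧ ctb v z = 0 := by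
    intro z p1 p2 p3 q2 q3 v
    constructor <;> exact ext8' b
      (by simp [SP0]) (by simp [SP1]) (by simp [SP2, p1, p2, p3])
      (by simp [SP3, p1, p3]) (by simp [SQ0]) (by simp [SQ1, p2, p3, q2, q3])
      (by simp [SQ2, p1, q2]) (by simp [SQ3, p1, q2, q3])
  -- the key consequence of integrability for central z
  have hA : ∀ z : L × Module.Dual ℝ L, PP b 1 z = 0 → PP b 2 z = 0 → PP b 3 z = 0 →
      QQ b 2 z = 0 → QQ b 3 z = 0 → ∀ v, J (ctb (J z) v) = ctb (J z) (J v) := by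
    intro z p1 p2 p3 q2 q3 v
    have h1 := (hcent z p1 p2 p3 q2 q3 v).1
    have h2 := (hcent z p1 p2 p3 q2 q3 (J v)).1
    have hn := hN z v
    simp only [nij, h1, h2, map_zero, zero_add, add_zero] at hn
    exact sub_eq_zero.mp hn
  -- orthogonality tools
  have hsymm : ∀ u v : L × Module.Dual ℝ L, ctf u v = ctf v u := by
    intro u v; simp only [ctf]; ring
  have hnegr : ∀ u v : L × Module.Dual ℝ L, ctf u (-v) = -ctf u v := by
    intro u v; simp only [ctf, Prod.fst_neg, Prod.snd_neg, LinearMap.neg_apply, map_neg]; ring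
  have horth : ∀ u v : L × Module.Dual ℝ L, ctf u (J v) = -ctf (J u) v := by
    intro u v
    have h := hH u (J v)
    rw [hJ2 v, hnegr] at h
    linarith [h]
  have hself : ∀ u : L × Module.Dual ℝ L, ctf u (J u) = 0 := by
    intro u
    have h1 := horth u u
    have h2 := hsymm (J u) u
    have h3 := hsymm u (J u)
    linarith
  -- Step A : first coordinate of J z vanishes for central z
  have hA1 : ∀ z : L × Module.Dual ℝ L, PP b 1 z = 0 → PP b 2 z = 0 → PP b 3 z = 0 →
      QQ b 2 z = 0 → QQ b 3 z = 0 → PP b 1 (J z) = 0 := by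
    intro z p1 p2 p3 q2 q3
    by_contra hc
    set x : L × Module.Dual ℝ L := EE b 2 - (QQ b 2 (J z) / PP b 1 (J z)) • FF b 1 with hxdef
    have xP0 : PP b 0 x = 0 := by simp [hxdef]
    have xP1 : PP b 1 x = 0 := by simp [hxdef]
    have xP2 : PP b 2 x = 1 := by simp [hxdef]
    have xP3 : PP b 3 x = 0 := by simp [hxdef]
    have xQ0 : QQ b 0 x = 0 := by simp [hxdef]
    have xQ1 : QQ b 1 x = -(QQ b 2 (J z) / PP b 1 (J z)) := by simp [hxdef]
    have xQ2 : QQ b 2 x = 0 := by simp [hxdef]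
    have xQ3 : QQ b 3 x = 0 := by simp [hxdef]
    have hx : ctb (J z) x = (PP b 1 (J z)) • x := by
      refine ext8' b ?_ ?_ ?_ ?_ ?_ ?_ ?_ ?_ <;>
        simp [SP0, SP1, SP2, SP3, SQ0, SQ1, SQ2, SQ3,
          xP0, xP1, xP2, xP3, xQ0, xQ1, xQ2, xQ3] <;> field_simp
    have heq : (PP b 1 (J z)) • (J x) = ctb (J z) (J x) := by
      rw [← map_smul, ← hx]; exact hA z p1 p2 p3 q2 q3 x
    have hy1 : PP b 1 (J x) = 0 := by
      have e := congrArg (PP b 1) heq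
      simp only [PP_smul, SP1] at e
      exact (mul_eq_zero.mp e).resolve_left hc
    have hy0 : PP b 0 (J x) = 0 := by
      have e := congrArg (PP b 0) heq
      simp only [PP_smul, SP0] at e
      exact (mul_eq_zero.mp e).resolve_left hc
    have hy3 : PP b 3 (J x) = 0 := by
      have e := congrArg (PP b 2) heq
      simp only [PP_smul, SP2, hy1, mul_zero, sub_zero] at e
      have : PP b 1 (J z) * PP b 3 (J x) = 0 := by linarith
      exact (mul_eq_zero.mp this).resolve_left hc
    have hY0 : QQ b 0 (J x) = 0 := by
      have e := congrArg (QQ b 0) heq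
      simp only [QQ_smul, SQ0] at e
      exact (mul_eq_zero.mp e).resolve_left hc
    have hY2 : QQ b 2 (J x) = 0 := by
      have e := congrArg (QQ b 2) heq
      simp only [QQ_smul, SQ2, hy1, zero_mul, add_zero] at e
      have : PP b 1 (J z) * QQ b 2 (J x) = 0 := by linarith
      exact (mul_eq_zero.mp this).resolve_left hc
    have hY3 : QQ b 3 (J x) = 0 := by
      have e := congrArg (QQ b 3) heq
      simp only [QQ_smul, SQ3, hy1, hY2, zero_mul, add_zero, zero_add] at e
      have : PP b 1 (J z) * QQ b 3 (J x) = 0 := by nlinarith [e]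
      exact (mul_eq_zero.mp this).resolve_left hc
    have hY1 : PP b 1 (J z) * QQ b 1 (J x) = -(PP b 2 (J x) * QQ b 2 (J z)) := by
      have e := congrArg (QQ b 1) heq
      simp only [QQ_smul, SQ1, hy3, hY2, hY3, mul_zero, zero_mul, add_zero, sub_zero,
        zero_add] at e
      nlinarith [e]
    have hJx : J x = (PP b 2 (J x)) • x := by
      refine ext8' b ?_ ?_ ?_ ?_ ?_ ?_ ?_ ?_ <;>
        simp [xP0, xP1, xP2, xP3, xQ0, xQ1, xQ2, xQ3, hy0, hy1, hy3, hY0, hY2, hY3]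
      field_simp
      nlinarith [hY1]
    have hxx := hJ2 x
    rw [hJx, map_smul, hJx, smul_smul] at hxx
    have e := congrArg (PP b 2) hxx
    simp only [PP_smul, PP_neg, xP2, mul_one] at e
    nlinarith [e, sq_nonneg (PP b 2 (J x))]
    -- generator facts
  have aE0 : PP b 1 (J (EE b 0)) = 0 :=
    hA1 (EE b 0) (by simp) (by simp) (by simp) (by simp) (by simp)
  have aF0 : PP b 1 (J (FF b 0)) = 0 :=
    hA1 (FF b 0) (by simp) (by simp) (by simp) (by simp) (by simp)
  have aF1 : PP b 1 (J (FF b 1)) = 0 :=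
    hA1 (FF b 1) (by simp) (by simp) (by simp) (by simp) (by simp)
  have hCF := ctf_eq b
  have wP0 : PP b 0 (J (FF b 1)) = 0 := by
    have h := horth (FF b 0) (FF b 1)
    rw [hCF, hCF] at h
    simp [aF0] at h
    linarith
  have wQ0 : QQ b 0 (J (FF b 1)) = 0 := by
    have h := horth (EE b 0) (FF b 1)
    rw [hCF, hCF] at h
    simp [aE0] at h
    linarith
  -- two bracket computations valid for all central z
  have hbr1 : ∀ z : L × Module.Dual ℝ L, PP b 1 (J z) = 0 →
      ctb (J z) (EE b 2) = (-(QQ b 2 (J z))) • FF b 1 := by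
    intro z az
    refine ext8' b ?_ ?_ ?_ ?_ ?_ ?_ ?_ ?_ <;>
      simp [SP0, SP1, SP2, SP3, SQ0, SQ1, SQ2, SQ3, az]
  have hbr2 : ∀ z : L × Module.Dual ℝ L, PP b 1 (J z) = 0 →
      ctb (J z) (FF b 2) = (PP b 2 (J z) + PP b 3 (J z)) • FF b 1 := by
    intro z az
    refine ext8' b ?_ ?_ ?_ ?_ ?_ ?_ ?_ ?_ <;>
      simp [SP0, SP1, SP2, SP3, SQ0, SQ1, SQ2, SQ3, az]
  -- Step C: the structure of w = J f1
  have hAw := hA (FF b 1) (by simp) (by simp) (by simp) (by simp) (by simp)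
  have hvv := hAw (EE b 1)
  obtain ⟨m, hm⟩ : ∃ r, PP b 1 (J (EE b 1)) = r := ⟨_, rfl⟩
  obtain ⟨n, hn⟩ : ∃ r, QQ b 1 (ctb (J (FF b 1)) (J (EE b 1))) = r := ⟨_, rfl⟩
  have hcomb : ctb (J (FF b 1)) (J (EE b 1)) =
      m • (ctb (J (FF b 1)) (EE b 1)) + n • FF b 1 := by
    rw [← hm, ← hn]
    refine ext8' b ?_ ?_ ?_ ?_ ?_ ?_ ?_ ?_ <;>
      simp [SP0, SP1, SP2, SP3, SQ0, SQ1, SQ2, SQ3, aF1] <;> ring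
  have hbig : m • (m • (ctb (J (FF b 1)) (EE b 1)) + n • FF b 1)
      + n • (J (FF b 1)) = -(ctb (J (FF b 1)) (EE b 1)) := by
    have h := hJ2 (ctb (J (FF b 1)) (EE b 1))
    rw [hvv, hcomb, map_add, map_smul, map_smul, hvv, hcomb] at h
    exact h
  have r1 := congrArg (PP b 2) hbig
  have r2 := congrArg (PP b 3) hbig
  have r3 := congrArg (QQ b 2) hbig
  have r4 := congrArg (QQ b 3) hbig
  simp [SP2, SP3, SQ2, SQ3, aF1] at r1 r2 r3 r4
  obtain ⟨hA3, hB2, hsplit⟩ := realCases m n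
    (PP b 2 (J (FF b 1))) (PP b 3 (J (FF b 1)))
    (QQ b 2 (J (FF b 1))) (QQ b 3 (J (FF b 1)))
    (by linarith [r1]) (by linarith [r2]) (by linarith [r3]) (by linarith [r4])
  -- degenerate case : w proportional to f1 is impossible
  have hdeg : PP b 2 (J (FF b 1)) = 0 → QQ b 3 (J (FF b 1)) = 0 → False := by
    intro dA2 dB3
    have hwF1 : J (FF b 1) = (QQ b 1 (J (FF b 1))) • FF b 1 := by
      refine ext8' b ?_ ?_ ?_ ?_ ?_ ?_ ?_ ?_ <;>
        simp [wP0, aF1, dA2, hA3, wQ0, hB2, dB3]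
    have h := congrArg (QQ b 1) (hJ2 (FF b 1))
    rw [hwF1, map_smul] at h
    simp at h
    nlinarith [h, sq_nonneg (QQ b 1 (J (FF b 1)))]
  rcases hsplit with cA2 | cB3
  · -- case (ii) : P2(Jf1) = 0 ; either degenerate or B3 ≠ 0
    by_cases cB3 : QQ b 3 (J (FF b 1)) = 0
    · exact hdeg cA2 cB3
    -- case (ii) proper
    have hwe2 : ctb (J (FF b 1)) (EE b 2) = 0 := by
      rw [hbr1 (FF b 1) aF1, hB2]; simp
    have h2 := hAw (EE b 2)
    rw [hwe2, map_zero] at h2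
    have ge2P1 : PP b 1 (J (EE b 2)) = 0 := by
      have r := congrArg (QQ b 3) h2
      simp [SQ3, aF1, hB2, -mul_eq_zero, -zero_eq_mul] at r
      have key : PP b 1 (J (EE b 2)) * QQ b 3 (J (FF b 1)) = 0 := by linarith [r]
      rcases mul_eq_zero.mp key with h | h
      · exact h
      · exact absurd h cB3
    have ge2P3 : PP b 3 (J (EE b 2)) = 0 := by
      have r := congrArg (QQ b 1) h2
      simp [SQ1, cA2, hA3, hB2, -mul_eq_zero, -zero_eq_mul] at r
      have key : PP b 3 (J (EE b 2)) * QQ b 3 (J (FF b 1)) = 0 := by linarith [r]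
      rcases mul_eq_zero.mp key with h | h
      · exact h
      · exact absurd h cB3
    have hwf2 : ctb (J (FF b 1)) (FF b 2) = 0 := by
      rw [hbr2 (FF b 1) aF1, cA2, hA3]; simp
    have h4 := hAw (FF b 2)
    rw [hwf2, map_zero] at h4
    have gf2P1 : PP b 1 (J (FF b 2)) = 0 := by
      have r := congrArg (QQ b 3) h4
      simp [SQ3, aF1, hB2, -mul_eq_zero, -zero_eq_mul] at r
      have key : PP b 1 (J (FF b 2)) * QQ b 3 (J (FF b 1)) = 0 := by linarith [r]
      rcases mul_eq_zero.mp key with h | h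
      · exact h
      · exact absurd h cB3
    have hblock : ∀ z : L × Module.Dual ℝ L, PP b 1 z = 0 → PP b 2 z = 0 → PP b 3 z = 0 →
        QQ b 2 z = 0 → QQ b 3 z = 0 →
        PP b 2 (J z) = 0 ∧ PP b 3 (J z) = 0 ∧ QQ b 2 (J z) = 0 := by
      intro z p1 p2 p3 q2 q3
      have az := hA1 z p1 p2 p3 q2 q3
      have hAz := hA z p1 p2 p3 q2 q3
      have hz0 : ctb (J (FF b 1)) z = 0 := (hcent z p1 p2 p3 q2 q3 (J (FF b 1))).2
      have h5 := hAw z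
      rw [hz0, map_zero] at h5
      have p3z : PP b 3 (J z) = 0 := by
        have r := congrArg (QQ b 1) h5
        simp [SQ1, cA2, hA3, hB2, -mul_eq_zero, -zero_eq_mul] at r
        have key : PP b 3 (J z) * QQ b 3 (J (FF b 1)) = 0 := by linarith [r]
        rcases mul_eq_zero.mp key with h | h
        · exact h
        · exact absurd h cB3
      have h6 := hAz (EE b 2)
      rw [hbr1 z az, map_smul] at h6
      have q2z : QQ b 2 (J z) = 0 := by
        have r := congrArg (QQ b 3) h6
        simp [SQ3, az, ge2P1, hB2, cB3, -mul_eq_zero, -zero_eq_mul] at r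
        have key : QQ b 2 (J z) * QQ b 3 (J (FF b 1)) = 0 := by linarith [r]
        rcases mul_eq_zero.mp key with h | h
        · exact h
        · exact absurd h cB3
      have h7 := hAz (FF b 2)
      rw [hbr2 z az, map_smul] at h7
      have p2z : PP b 2 (J z) = 0 := by
        have r := congrArg (QQ b 3) h7
        simp [SQ3, az, gf2P1, p3z, -mul_eq_zero, -zero_eq_mul] at r
        have key : PP b 2 (J z) * QQ b 3 (J (FF b 1)) = 0 := by linarith [r]
        rcases mul_eq_zero.mp key with h | h
        · exact h
        · exact absurd h cB3
      exact ⟨p2z, p3z, q2z⟩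
    obtain ⟨eP2, eP3, eQ2⟩ := hblock (EE b 0) (by simp) (by simp) (by simp) (by simp) (by simp)
    obtain ⟨fP2, fP3, fQ2⟩ := hblock (FF b 0) (by simp) (by simp) (by simp) (by simp) (by simp)
    have h1 := hself (EE b 0 + FF b 0)
    have h2 := hH (EE b 0 + FF b 0) (EE b 0 + FF b 0)
    rw [hCF] at h1
    rw [hCF, hCF] at h2
    simp [aE0, aF0, eP2, eP3, eQ2, fP2, fP3, fQ2] at h1 h2
    have hTS : QQ b 0 (J (EE b 0)) + QQ b 0 (J (FF b 0))
        = -(PP b 0 (J (EE b 0)) + PP b 0 (J (FF b 0))) := by linarith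
    rw [hTS] at h2
    nlinarith [h2, sq_nonneg (PP b 0 (J (EE b 0)) + PP b 0 (J (FF b 0)))]
  · -- case (i) : Q3(Jf1) = 0 ; either degenerate or A2 ≠ 0
    by_cases cA2 : PP b 2 (J (FF b 1)) = 0
    · exact hdeg cA2 cB3
    -- case (i) proper
    have hwe2 : ctb (J (FF b 1)) (EE b 2) = 0 := by
      rw [hbr1 (FF b 1) aF1, hB2]; simp
    have h2 := hAw (EE b 2)
    rw [hwe2, map_zero] at h2
    have ge2P1 : PP b 1 (J (EE b 2)) = 0 := by
      have r := congrArg (PP b 2) h2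
      simp [SP2, aF1, hA3, -mul_eq_zero, -zero_eq_mul] at r
      have key : PP b 1 (J (EE b 2)) * PP b 2 (J (FF b 1)) = 0 := by linarith [r]
      rcases mul_eq_zero.mp key with h | h
      · exact h
      · exact absurd h cA2
    have hwf2 : ctb (J (FF b 1)) (FF b 2) = (PP b 2 (J (FF b 1))) • FF b 1 := by
      rw [hbr2 (FF b 1) aF1, hA3, add_zero]
    have h4 := hAw (FF b 2)
    rw [hwf2, map_smul] at h4
    have gf2P1 : PP b 1 (J (FF b 2)) = -(PP b 2 (J (FF b 1))) := by
      have r := congrArg (PP b 2) h4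
      simp [SP2, aF1, hA3, -mul_eq_zero, -zero_eq_mul] at r
      have key : PP b 2 (J (FF b 1)) * (PP b 1 (J (FF b 2)) + PP b 2 (J (FF b 1))) = 0 := by
        linarith [r]
      rcases mul_eq_zero.mp key with h | h
      · exact absurd h cA2
      · linarith
    have hblock : ∀ z : L × Module.Dual ℝ L, PP b 1 z = 0 → PP b 2 z = 0 → PP b 3 z = 0 →
        QQ b 2 z = 0 → QQ b 3 z = 0 →
        PP b 3 (J z) = 0 ∧ QQ b 2 (J z) = 0 ∧ QQ b 3 (J z) = 0 := by
      intro z p1 p2 p3 q2 q3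
      have az := hA1 z p1 p2 p3 q2 q3
      have hAz := hA z p1 p2 p3 q2 q3
      have h6 := hAz (EE b 2)
      rw [hbr1 z az, map_smul] at h6
      have q2z : QQ b 2 (J z) = 0 := by
        have r := congrArg (PP b 2) h6
        simp [SP2, az, aF1, ge2P1, hA3, -mul_eq_zero, -zero_eq_mul] at r
        have key : QQ b 2 (J z) * PP b 2 (J (FF b 1)) = 0 := by linarith [r]
        rcases mul_eq_zero.mp key with h | h
        · exact h
        · exact absurd h cA2
      have h7 := hAz (FF b 2)
      rw [hbr2 z az, map_smul] at h7
      have p3z : PP b 3 (J z) = 0 := by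
        have r := congrArg (PP b 3) h7
        simp [SP3, az, hA3, gf2P1, -mul_eq_zero, -zero_eq_mul] at r
        have key : PP b 3 (J z) * PP b 2 (J (FF b 1)) = 0 := by linarith [r]
        rcases mul_eq_zero.mp key with h | h
        · exact h
        · exact absurd h cA2
      have q3z : QQ b 3 (J z) = 0 := by
        have r := congrArg (QQ b 3) h7
        simp [SQ3, az, gf2P1, cB3, q2z, hB2, -mul_eq_zero, -zero_eq_mul] at r
        have key : QQ b 3 (J z) * PP b 2 (J (FF b 1)) = 0 := by linarith [r]
        rcases mul_eq_zero.mp key with h | h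
        · exact h
        · exact absurd h cA2
      exact ⟨p3z, q2z, q3z⟩
    obtain ⟨eP3, eQ2, eQ3⟩ := hblock (EE b 0) (by simp) (by simp) (by simp) (by simp) (by simp)
    obtain ⟨fP3, fQ2, fQ3⟩ := hblock (FF b 0) (by simp) (by simp) (by simp) (by simp) (by simp)
    have h1 := hself (EE b 0 + FF b 0)
    have h2 := hH (EE b 0 + FF b 0) (EE b 0 + FF b 0)
    rw [hCF] at h1
    rw [hCF, hCF] at h2
    simp [aE0, aF0, eP3, eQ2, eQ3, fP3, fQ2, fQ3] at h1 h2
    have hTS : QQ b 0 (J (EE b 0)) + QQ b 0 (J (FF b 0))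
        = -(PP b 0 (J (EE b 0)) + PP b 0 (J (FF b 0))) := by linarith
    rw [hTS] at h2
    nlinarith [h2, sq_nonneg (PP b 0 (J (EE b 0)) + PP b 0 (J (FF b 0)))]
end

section
/- Let g = r₄ be the 4-dimensional solvable Lie algebra with nonzero brackets [e₀,e₁] = e₁, [e₀,e₂] = e₁ + e₂, [e₀,e₃] = e₂ + e₃. Then r₄ admits no generalized complex structure, i.e. there is no endomorphism J of g ⊕ g* with J² = -id, orthogonal for the standard neutral form, and with vanishing Nijenhuis tensor for the cotangent Lie bracket. -/
open LieAlgebra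

set_option maxHeartbeats 4000000
theorem corelemma (A P S D : Fin 4 → Fin 4 → ℝ)
    (hP : ∀ i j : Fin 4, P j i = - P i j) (hS : ∀ i j : Fin 4, S j i = - S i j)
    (hD : ∀ i j : Fin 4, D i j = - A j i)
    (eN463 : P 3 0 * P 3 0 + P 2 0 * P 3 0 + P 0 2 * P 3 0 + (-1 : ℝ) * P 0 0 * P 3 3 + (-2 : ℝ) * P 0 0 * P 3 2 = 0)
    (eN452 : P 2 0 * P 2 0 + P 1 0 * P 2 0 + P 0 1 * P 3 0 + P 0 1 * P 2 0 + (-1 : ℝ) * P 0 0 * P 3 1 + (-1 : ℝ) * P 0 0 * P 2 2 + (-2 : ℝ) * P 0 0 * P 2 1 = 0)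
    (eN120 : (-1 : ℝ) * P 0 0 * S 2 1 + P 0 0 * S 1 2 + (-1 : ℝ) * P 0 0 * S 1 1 + A 0 1 * A 0 1 = 0)
    (eN230 : (-1 : ℝ) * P 0 0 * S 3 2 + P 0 0 * S 2 3 + (-1 : ℝ) * P 0 0 * S 2 2 + P 0 0 * S 1 3 + A 0 2 * A 0 2 + (-1 : ℝ) * A 0 1 * A 0 3 = 0)
    (eN341 : P 1 0 * D 3 0 + P 1 0 * D 2 0 + A 2 3 * P 0 0 + (-1 : ℝ) * A 1 2 * P 0 0 + (-1 : ℝ) * A 0 3 * P 2 0 + (-1 : ℝ) * A 0 3 * P 1 0 = 0)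
    (eN563 : P 3 0 * P 3 1 + (-1 : ℝ) * P 2 2 * P 3 0 + P 2 1 * P 3 0 + (-1 : ℝ) * P 1 2 * P 3 0 + P 0 2 * P 3 2 + 2 * P 0 2 * P 3 1 + (-1 : ℝ) * P 0 1 * P 3 3 + (-2 : ℝ) * P 0 1 * P 3 2 = 0)
    (eN121 : (-1 : ℝ) * P 1 0 * S 2 1 + P 1 0 * S 1 2 + (-1 : ℝ) * P 1 0 * S 1 1 + A 0 2 * A 2 1 + (-1 : ℝ) * A 0 1 * A 2 2 + A 0 1 * A 1 1 = 0)
    (eN252 : P 2 0 * D 2 1 + P 2 0 * D 1 1 + A 3 2 * P 0 1 + A 2 2 * P 2 0 + (-1 : ℝ) * A 2 1 * P 0 1 + A 1 2 * P 2 0 + (-1 : ℝ) * A 0 2 * P 3 1 + (-1 : ℝ) * A 0 2 * P 2 2 + (-2 : ℝ) * A 0 2 * P 2 1 = 0)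
    (eN363 : P 3 0 * D 3 2 + P 3 0 * D 2 2 + A 3 3 * P 3 0 + (-1 : ℝ) * A 3 2 * P 0 2 + A 2 3 * P 3 0 + (-1 : ℝ) * A 0 3 * P 3 3 + (-2 : ℝ) * A 0 3 * P 3 2 = 0)
    (eN127 : (-1 : ℝ) * S 2 1 * D 3 0 + S 1 2 * D 3 0 + (-1 : ℝ) * S 1 1 * D 3 0 + (-2 : ℝ) * A 0 2 * S 3 1 + (-1 : ℝ) * A 0 2 * S 2 1 + 2 * A 0 1 * S 3 2 + A 0 1 * S 3 1 + A 0 1 * S 2 2 = 0)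
    (eN232 : (-1 : ℝ) * P 2 0 * S 3 2 + P 2 0 * S 2 3 + (-1 : ℝ) * P 2 0 * S 2 2 + P 2 0 * S 1 3 + A 0 3 * A 3 2 + (-1 : ℝ) * A 0 3 * A 2 1 + (-1 : ℝ) * A 0 2 * A 3 3 + A 0 2 * A 2 2 = 0)
    (eN352 : P 2 0 * D 3 1 + P 2 0 * D 2 1 + A 3 3 * P 0 1 + A 2 3 * P 2 0 + (-1 : ℝ) * A 2 2 * P 0 1 + A 1 3 * P 2 0 + (-1 : ℝ) * A 0 3 * P 3 1 + (-1 : ℝ) * A 0 3 * P 2 2 + (-2 : ℝ) * A 0 3 * P 2 1 = 0)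
    (eJ34 : P 3 3 * D 3 0 + P 3 2 * D 2 0 + P 3 1 * D 1 0 + P 3 0 * D 0 0 + A 3 3 * P 3 0 + A 3 2 * P 2 0 + A 3 1 * P 1 0 + A 3 0 * P 0 0 = 0)
    (eJ24 : P 2 3 * D 3 0 + P 2 2 * D 2 0 + P 2 1 * D 1 0 + P 2 0 * D 0 0 + A 2 3 * P 3 0 + A 2 2 * P 2 0 + A 2 1 * P 1 0 + A 2 0 * P 0 0 = 0)
    (eJ22 : 1 + P 2 3 * S 3 2 + P 2 2 * S 2 2 + P 2 1 * S 1 2 + P 2 0 * S 0 2 + A 2 3 * A 3 2 + A 2 2 * A 2 2 + A 1 2 * A 2 1 + A 0 2 * A 2 0 = 0)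
    (eJ00 : 1 + P 0 3 * S 3 0 + P 0 2 * S 2 0 + P 0 1 * S 1 0 + P 0 0 * S 0 0 + A 0 3 * A 3 0 + A 0 2 * A 2 0 + A 0 1 * A 1 0 + A 0 0 * A 0 0 = 0)
    (eJ01 : P 0 3 * S 3 1 + P 0 2 * S 2 1 + P 0 1 * S 1 1 + P 0 0 * S 0 1 + A 0 3 * A 3 1 + A 0 2 * A 2 1 + A 0 1 * A 1 1 + A 0 0 * A 0 1 = 0)
    (eJ31 : P 3 3 * S 3 1 + P 3 2 * S 2 1 + P 3 1 * S 1 1 + P 3 0 * S 0 1 + A 3 1 * A 3 3 + A 2 1 * A 3 2 + A 1 1 * A 3 1 + A 0 1 * A 3 0 = 0)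
    (eJ14 : P 1 3 * D 3 0 + P 1 2 * D 2 0 + P 1 1 * D 1 0 + P 1 0 * D 0 0 + A 1 3 * P 3 0 + A 1 2 * P 2 0 + A 1 1 * P 1 0 + A 1 0 * P 0 0 = 0)
    (eJ11 : 1 + P 1 3 * S 3 1 + P 1 2 * S 2 1 + P 1 1 * S 1 1 + P 1 0 * S 0 1 + A 1 3 * A 3 1 + A 1 2 * A 2 1 + A 1 1 * A 1 1 + A 0 1 * A 1 0 = 0)
    : False := by
  have zp03 : P 0 3 = 0 := by
    have hsq : P 0 3 ^ 2 = 0 := by linear_combination (1) * (eN463) + ((-1 : ℝ) * P 3 0) * (hP 0 3) + ((-1 : ℝ) * P 3 0) * (hP 0 2) + (P 0 3) * (hP 0 3) + ((1/2 : ℝ) * P 3 3) * (hP 0 0) + (P 3 2) * (hP 0 0)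
    exact pow_eq_zero_iff two_ne_zero |>.mp hsq
  have zp02 : P 0 2 = 0 := by
    have hsq : P 0 2 ^ 2 = 0 := by linear_combination (1) * (eN452) + ((-1 : ℝ) * P 2 0) * (hP 0 2) + ((-1 : ℝ) * P 2 0) * (hP 0 1) + (P 0 2) * (hP 0 2) + ((-1 : ℝ) * P 0 1) * (hP 0 3) + ((1/2 : ℝ) * P 3 1) * (hP 0 0) + ((1/2 : ℝ) * P 2 2) * (hP 0 0) + (P 2 1) * (hP 0 0) + (P 0 1) * (zp03)
    exact pow_eq_zero_iff two_ne_zero |>.mp hsq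
  have za01 : A 0 1 = 0 := by
    have hsq : A 0 1 ^ 2 = 0 := by linear_combination (1) * (eN120) + ((1/2 : ℝ) * S 2 1) * (hP 0 0) + ((-1/2 : ℝ) * S 1 2) * (hP 0 0) + ((1/2 : ℝ) * S 1 1) * (hP 0 0)
    exact pow_eq_zero_iff two_ne_zero |>.mp hsq
  have za02 : A 0 2 = 0 := by
    have hsq : A 0 2 ^ 2 = 0 := by linear_combination (1) * (eN230) + ((1/2 : ℝ) * S 3 2) * (hP 0 0) + ((-1/2 : ℝ) * S 2 3) * (hP 0 0) + ((1/2 : ℝ) * S 2 2) * (hP 0 0) + ((-1/2 : ℝ) * S 1 3) * (hP 0 0) + (A 0 3) * (za01)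
    exact pow_eq_zero_iff two_ne_zero |>.mp hsq
  by_cases hp01 : P 0 1 = 0
  case pos =>
    by_cases ha03 : A 0 3 = 0
    case pos =>
      have hfin : (1:ℝ) + A 0 0 ^ 2 = 0 := by linear_combination (1) * (eJ00) + ((-1 : ℝ) * P 0 3) * (hS 0 3) + ((-1 : ℝ) * P 0 2) * (hS 0 2) + ((-1 : ℝ) * P 0 1) * (hS 0 1) + ((-1/2 : ℝ) * S 0 0) * (hP 0 0) + (S 0 3) * (zp03) + (S 0 2) * (zp02) + ((-1 : ℝ) * A 1 0) * (za01) + ((-1 : ℝ) * A 2 0) * (za02) + (S 0 1) * (hp01) + ((-1 : ℝ) * A 3 0) * (ha03)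
      exact (show (0:ℝ) < 1 + A 0 0 ^ 2 by positivity).ne' hfin
    case neg =>
      have zp23 : P 2 3 = 0 := by
        have hm : A 0 3 * P 2 3 = 0 := by linear_combination ((1/2 : ℝ)) * (eN363) + ((-1/2 : ℝ) * D 3 2) * (hP 0 3) + ((-1/2 : ℝ) * D 2 2) * (hP 0 3) + ((1/2 : ℝ) * P 0 3) * (hD 3 2) + ((1/2 : ℝ) * P 0 3) * (hD 2 2) + ((-1/2 : ℝ) * A 3 3) * (hP 0 3) + ((-1/2 : ℝ) * A 2 3) * (hP 0 3) + ((1/4 : ℝ) * A 0 3) * (hP 3 3) + (A 0 3) * (hP 2 3) + ((1/2 : ℝ) * A 3 3) * (zp03) + ((-1/2 : ℝ) * A 2 2) * (zp03) + ((1/2 : ℝ) * A 3 2) * (zp02)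
        exact (mul_eq_zero.mp hm).resolve_left ha03
      have za31 : A 3 1 = 0 := by
        have hm : A 0 3 * A 3 1 = 0 := by linear_combination (1) * (eJ01) + ((-1 : ℝ) * P 0 3) * (hS 1 3) + ((-1 : ℝ) * P 0 2) * (hS 1 2) + ((-1/2 : ℝ) * P 0 1) * (hS 1 1) + ((-1/2 : ℝ) * S 0 1) * (hP 0 0) + (S 1 3) * (zp03) + (S 1 2) * (zp02) + ((-1 : ℝ) * A 1 1) * (za01) + ((-1 : ℝ) * A 0 0) * (za01) + ((-1 : ℝ) * A 2 1) * (za02)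
        exact (mul_eq_zero.mp hm).resolve_left ha03
      have zs12 : S 1 2 = 0 := by
        have hm : A 0 3 * S 1 2 = 0 := by linear_combination ((-1/2 : ℝ)) * (eN127) + ((-1/2 : ℝ) * D 3 0) * (hS 1 2) + (S 1 2) * (hD 3 0) + ((-1/4 : ℝ) * D 3 0) * (hS 1 1) + ((-1 : ℝ) * A 0 2) * (hS 1 3) + ((-1/2 : ℝ) * A 0 2) * (hS 1 2) + (A 0 1) * (hS 2 3) + ((1/2 : ℝ) * A 0 1) * (hS 1 3) + ((1/4 : ℝ) * A 0 1) * (hS 2 2) + ((-1 : ℝ) * S 2 3) * (za01) + ((-1/2 : ℝ) * S 1 3) * (za01) + (S 1 3) * (za02) + ((1/2 : ℝ) * S 1 2) * (za02)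
        exact (mul_eq_zero.mp hm).resolve_left ha03
      have m32 : A 3 2 = A 2 1 := by
        have hm : A 0 3 * (A 3 2 - A 2 1) = 0 := by linear_combination (1) * (eN232) + (S 3 2) * (hP 0 2) + ((-1 : ℝ) * S 2 3) * (hP 0 2) + (S 2 2) * (hP 0 2) + ((-1 : ℝ) * S 1 3) * (hP 0 2) + ((-1 : ℝ) * P 0 2) * (hS 2 3) + ((-1/2 : ℝ) * P 0 2) * (hS 2 2) + (2 * S 2 3) * (zp02) + (S 1 3) * (zp02) + (A 3 3) * (za02) + ((-1 : ℝ) * A 2 2) * (za02)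
        have h2 := (mul_eq_zero.mp hm).resolve_left ha03
        linarith
      have za32 : A 3 2 = 0 := by
        have hsq : A 3 2 ^ 2 = 0 := by linear_combination (1) * (eJ31) + ((-1/2 : ℝ) * S 3 1) * (hP 3 3) + ((-1 : ℝ) * S 2 1) * (hP 2 3) + ((-1 : ℝ) * S 1 1) * (hP 1 3) + ((-1 : ℝ) * S 0 1) * (hP 0 3) + (P 2 3) * (hS 1 2) + ((1/2 : ℝ) * P 1 3) * (hS 1 1) + (S 0 1) * (zp03) + ((-1 : ℝ) * A 3 0) * (za01) + ((-1 : ℝ) * S 1 2) * (zp23) + ((-1 : ℝ) * A 3 3) * (za31) + ((-1 : ℝ) * A 1 1) * (za31) + (A 3 2) * (m32)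
        exact pow_eq_zero_iff two_ne_zero |>.mp hsq
      have za21 : A 2 1 = 0 := m32.symm.trans za32
      have zp13 : P 1 3 = 0 := by
        have hm : A 0 3 * P 1 3 = 0 := by linear_combination ((-1 : ℝ)) * (eJ14) + (P 1 3) * (hD 3 0) + (P 1 2) * (hD 2 0) + ((1/2 : ℝ) * D 1 0) * (hP 1 1) + (D 0 0) * (hP 0 1) + ((-1 : ℝ) * P 0 1) * (hD 0 0) + (A 1 3) * (hP 0 3) + (A 1 2) * (hP 0 2) + (A 1 1) * (hP 0 1) + ((1/2 : ℝ) * A 1 0) * (hP 0 0) + ((-1 : ℝ) * A 1 3) * (zp03) + ((-1 : ℝ) * A 1 2) * (zp02) + ((-1 : ℝ) * P 1 2) * (za02) + ((-1 : ℝ) * A 1 1) * (hp01) + (A 0 0) * (hp01)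
        exact (mul_eq_zero.mp hm).resolve_left ha03
      have zp12 : P 1 2 = 0 := by
        have hm : A 0 3 * P 1 2 = 0 := by linear_combination ((1/2 : ℝ)) * (eN352) + ((-1/2 : ℝ) * D 3 1) * (hP 0 2) + ((-1/2 : ℝ) * D 2 1) * (hP 0 2) + ((1/2 : ℝ) * P 0 2) * (hD 3 1) + ((1/2 : ℝ) * P 0 2) * (hD 2 1) + ((-1/2 : ℝ) * A 2 3) * (hP 0 2) + ((-1/2 : ℝ) * A 1 3) * (hP 0 2) + ((1/2 : ℝ) * A 0 3) * (hP 1 3) + ((1/4 : ℝ) * A 0 3) * (hP 2 2) + (A 0 3) * (hP 1 2) + ((1/2 : ℝ) * A 2 3) * (zp02) + ((-1/2 : ℝ) * A 1 2) * (zp02) + ((-1/2 : ℝ) * A 3 3) * (hp01) + ((1/2 : ℝ) * A 2 2) * (hp01) + ((-1/2 : ℝ) * A 0 3) * (zp13)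
        exact (mul_eq_zero.mp hm).resolve_left ha03
      have hfin : (1:ℝ) + A 1 1 ^ 2 = 0 := by linear_combination (1) * (eJ11) + ((-1 : ℝ) * P 1 3) * (hS 1 3) + ((-1 : ℝ) * P 1 2) * (hS 1 2) + ((-1/2 : ℝ) * S 1 1) * (hP 1 1) + ((-1 : ℝ) * S 0 1) * (hP 0 1) + ((-1 : ℝ) * A 1 0) * (za01) + (S 0 1) * (hp01) + ((-1 : ℝ) * A 1 3) * (za31) + (P 1 2) * (zs12) + (A 1 2) * (m32) + ((-1 : ℝ) * A 1 2) * (za32) + (S 1 3) * (zp13)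
      exact (show (0:ℝ) < 1 + A 1 1 ^ 2 by positivity).ne' hfin
  case neg =>
    have za03 : A 0 3 = 0 := by
      have hm : A 0 3 * P 0 1 = 0 := by linear_combination ((1/2 : ℝ)) * (eN341) + ((-1/2 : ℝ) * D 3 0) * (hP 0 1) + ((-1/2 : ℝ) * D 2 0) * (hP 0 1) + ((1/2 : ℝ) * P 0 1) * (hD 3 0) + ((1/2 : ℝ) * P 0 1) * (hD 2 0) + ((-1/4 : ℝ) * A 2 3) * (hP 0 0) + ((1/4 : ℝ) * A 1 2) * (hP 0 0) + ((1/2 : ℝ) * A 0 3) * (hP 0 2) + ((1/2 : ℝ) * A 0 3) * (hP 0 1) + ((-1/2 : ℝ) * A 0 3) * (zp02) + ((-1/2 : ℝ) * P 0 1) * (za02)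
      exact (mul_eq_zero.mp hm).resolve_right hp01
    have zp23 : P 2 3 = 0 := by
      have hm : P 2 3 * P 0 1 = 0 := by linear_combination ((1/2 : ℝ)) * (eN563) + ((-1/2 : ℝ) * P 3 1) * (hP 0 3) + ((1/4 : ℝ) * P 3 0) * (hP 2 2) + ((-1/2 : ℝ) * P 3 0) * (hP 1 2) + (P 1 2) * (hP 0 3) + ((1/2 : ℝ) * P 0 3) * (hP 1 3) + ((-1/2 : ℝ) * P 0 2) * (hP 2 3) + ((-1 : ℝ) * P 0 2) * (hP 1 3) + ((1/4 : ℝ) * P 0 1) * (hP 3 3) + (P 0 1) * (hP 2 3) + ((-1/2 : ℝ) * P 1 3) * (zp03) + ((-1 : ℝ) * P 1 2) * (zp03) + ((1/2 : ℝ) * P 2 3) * (zp02) + (P 1 3) * (zp02)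
      exact (mul_eq_zero.mp hm).resolve_right hp01
    have za31 : A 3 1 = 0 := by
      have hm : A 3 1 * P 0 1 = 0 := by linear_combination ((-1 : ℝ)) * (eJ34) + ((1/2 : ℝ) * D 3 0) * (hP 3 3) + (D 2 0) * (hP 2 3) + (D 1 0) * (hP 1 3) + (D 0 0) * (hP 0 3) + ((-1 : ℝ) * P 2 3) * (hD 2 0) + ((-1 : ℝ) * P 1 3) * (hD 1 0) + ((-1 : ℝ) * P 0 3) * (hD 0 0) + (A 3 3) * (hP 0 3) + (A 3 2) * (hP 0 2) + (A 3 1) * (hP 0 1) + ((1/2 : ℝ) * A 3 0) * (hP 0 0) + ((-1 : ℝ) * A 3 3) * (zp03) + (A 0 0) * (zp03) + ((-1 : ℝ) * A 3 2) * (zp02) + (P 1 3) * (za01) + (P 2 3) * (za02)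
      exact (mul_eq_zero.mp hm).resolve_right hp01
    have za21 : A 2 1 = 0 := by
      have hm : A 2 1 * P 0 1 = 0 := by linear_combination ((-1 : ℝ)) * (eJ24) + (P 2 3) * (hD 3 0) + ((1/2 : ℝ) * D 2 0) * (hP 2 2) + (D 1 0) * (hP 1 2) + (D 0 0) * (hP 0 2) + ((-1 : ℝ) * P 1 2) * (hD 1 0) + ((-1 : ℝ) * P 0 2) * (hD 0 0) + (A 2 3) * (hP 0 3) + (A 2 2) * (hP 0 2) + (A 2 1) * (hP 0 1) + ((1/2 : ℝ) * A 2 0) * (hP 0 0) + ((-1 : ℝ) * A 2 3) * (zp03) + ((-1 : ℝ) * A 2 2) * (zp02) + (A 0 0) * (zp02) + (P 1 2) * (za01) + ((-1 : ℝ) * P 2 3) * (za03)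
      exact (mul_eq_zero.mp hm).resolve_right hp01
    have zs12 : S 1 2 = 0 := by
      have hm : S 1 2 * P 0 1 = 0 := by linear_combination ((-1/2 : ℝ)) * (eN121) + ((-1/2 : ℝ) * S 2 1) * (hP 0 1) + ((1/2 : ℝ) * S 1 2) * (hP 0 1) + ((-1/2 : ℝ) * S 1 1) * (hP 0 1) + ((1/2 : ℝ) * P 0 1) * (hS 1 2) + ((1/4 : ℝ) * P 0 1) * (hS 1 1) + ((-1/2 : ℝ) * A 2 2) * (za01) + ((1/2 : ℝ) * A 1 1) * (za01) + ((1/2 : ℝ) * A 2 1) * (za02)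
      exact (mul_eq_zero.mp hm).resolve_right hp01
    have za32 : A 3 2 = 0 := by
      have hm : A 3 2 * P 0 1 = 0 := by linear_combination (1) * (eN252) + ((-1 : ℝ) * D 2 1) * (hP 0 2) + ((-1 : ℝ) * D 1 1) * (hP 0 2) + (P 0 2) * (hD 2 1) + (P 0 2) * (hD 1 1) + ((-1 : ℝ) * A 2 2) * (hP 0 2) + ((-1 : ℝ) * A 1 2) * (hP 0 2) + (A 0 2) * (hP 1 3) + ((1/2 : ℝ) * A 0 2) * (hP 2 2) + (2 * A 0 2) * (hP 1 2) + (A 2 2) * (zp02) + ((-1 : ℝ) * A 1 1) * (zp02) + ((-1 : ℝ) * P 1 3) * (za02) + ((-2 : ℝ) * P 1 2) * (za02) + (P 0 1) * (za21)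
      exact (mul_eq_zero.mp hm).resolve_right hp01
    have hfin : (1:ℝ) + A 2 2 ^ 2 = 0 := by linear_combination (1) * (eJ22) + ((-1 : ℝ) * P 2 3) * (hS 2 3) + ((-1/2 : ℝ) * S 2 2) * (hP 2 2) + ((-1 : ℝ) * S 1 2) * (hP 1 2) + ((-1 : ℝ) * S 0 2) * (hP 0 2) + (S 0 2) * (zp02) + ((-1 : ℝ) * A 2 0) * (za02) + (S 2 3) * (zp23) + ((-1 : ℝ) * A 1 2) * (za21) + (P 1 2) * (zs12) + ((-1 : ℝ) * A 2 3) * (za32)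
    exact (show (0:ℝ) < 1 + A 2 2 ^ 2 by positivity).ne' hfin

/-- The Lie algebra `r₄` (`[e₀,e₁]=e₁`, `[e₀,e₂]=e₁+e₂`, `[e₀,e₃]=e₂+e₃`)
admits no generalized complex structure. -/
theorem r4_no_generalized_complex_structure
    (L : Type*) [LieRing L] [LieAlgebra ℝ L] [FiniteDimensional ℝ L]
    (b : Module.Basis (Fin 4) ℝ L)
    (h01 : ⁅b 0, b 1⁆ = b 1) (h02 : ⁅b 0, b 2⁆ = b 1 + b 2)
    (h03 : ⁅b 0, b 3⁆ = b 2 + b 3)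
    (hz : ∀ i j : Fin 4, i < j →
      (i, j) ≠ ((0 : Fin 4), (1 : Fin 4)) →
      (i, j) ≠ ((0 : Fin 4), (2 : Fin 4)) →
      (i, j) ≠ ((0 : Fin 4), (3 : Fin 4)) → ⁅b i, b j⁆ = 0) :
    ¬ ∃ J : L × Module.Dual ℝ L →ₗ[ℝ] L × Module.Dual ℝ L,
      (∀ u, J (J u) = -u) ∧
      (∀ u v, ctf (J u) (J v) = ctf u v) ∧
      (∀ u v, nij (J ·) u v = 0) := by
  rintro ⟨J, hJJ, horth, hnij⟩
  classical
  set dd := b.dualBasis with hdd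
  -- basic bracket table
  have k00 : ⁅b 0, b 0⁆ = 0 := lie_self _
  have k11 : ⁅b 1, b 1⁆ = 0 := lie_self _
  have k22 : ⁅b 2, b 2⁆ = 0 := lie_self _
  have k33 : ⁅b 3, b 3⁆ = 0 := lie_self _
  have k12 : ⁅b 1, b 2⁆ = 0 := hz 1 2 (by decide) (by decide) (by decide) (by decide)
  have k13 : ⁅b 1, b 3⁆ = 0 := hz 1 3 (by decide) (by decide) (by decide) (by decide)
  have k23 : ⁅b 2, b 3⁆ = 0 := hz 2 3 (by decide) (by decide) (by decide) (by decide)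
  have k10 : ⁅b 1, b 0⁆ = -(b 1) := by rw [← lie_skew, h01]
  have k20 : ⁅b 2, b 0⁆ = -(b 1 + b 2) := by rw [← lie_skew, h02]
  have k30 : ⁅b 3, b 0⁆ = -(b 2 + b 3) := by rw [← lie_skew, h03]
  have k21 : ⁅b 2, b 1⁆ = 0 := by rw [← lie_skew, k12, neg_zero]
  have k31 : ⁅b 3, b 1⁆ = 0 := by rw [← lie_skew, k13, neg_zero]
  have k32 : ⁅b 3, b 2⁆ = 0 := by rw [← lie_skew, k23, neg_zero]
  -- the bracket in coordinates
  have hbr : ∀ x y : L, ⁅x, y⁆ =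
      (b.repr x 0 * b.repr y 1 - b.repr x 1 * b.repr y 0
        + (b.repr x 0 * b.repr y 2 - b.repr x 2 * b.repr y 0)) • b 1
      + (b.repr x 0 * b.repr y 2 - b.repr x 2 * b.repr y 0
        + (b.repr x 0 * b.repr y 3 - b.repr x 3 * b.repr y 0)) • b 2
      + (b.repr x 0 * b.repr y 3 - b.repr x 3 * b.repr y 0) • b 3 := by
    intro x y
    conv_lhs => rw [← b.sum_repr x, ← b.sum_repr y]
    rw [Fin.sum_univ_four, Fin.sum_univ_four]
    simp only [add_lie, lie_add, smul_lie, lie_smul, k00, k11, k22, k33, k12, k13, k23,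
      k10, k20, k30, k21, k31, k32, h01, h02, h03, smul_zero, zero_add, add_zero,
      smul_add, smul_neg, smul_smul]
    module
  -- dual basis evaluation
  have hddx : ∀ (j : Fin 4) (x : L), dd j x = b.repr x j := fun j x => b.dualBasis_apply j x
  have hddb : ∀ i j : Fin 4, dd i (b j) = if j = i then 1 else 0 := fun i j =>
    Module.Basis.dualBasis_apply_self b i j
  -- matrix entries
  obtain ⟨MA, hMA⟩ : ∃ M : Fin 4 → Fin 4 → ℝ,
      ∀ i j : Fin 4, b.repr (J (b j, (0 : Module.Dual ℝ L))).1 i = M i j :=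
    ⟨fun i j => b.repr (J (b j, (0 : Module.Dual ℝ L))).1 i, fun _ _ => rfl⟩
  obtain ⟨MS, hMS⟩ : ∃ M : Fin 4 → Fin 4 → ℝ,
      ∀ i j : Fin 4, (J (b j, (0 : Module.Dual ℝ L))).2 (b i) = M i j :=
    ⟨fun i j => (J (b j, (0 : Module.Dual ℝ L))).2 (b i), fun _ _ => rfl⟩
  obtain ⟨MP, hMP⟩ : ∃ M : Fin 4 → Fin 4 → ℝ,
      ∀ i j : Fin 4, b.repr (J ((0 : L), dd j)).1 i = M i j :=
    ⟨fun i j => b.repr (J ((0 : L), dd j)).1 i, fun _ _ => rfl⟩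
  obtain ⟨MD, hMD⟩ : ∃ M : Fin 4 → Fin 4 → ℝ,
      ∀ i j : Fin 4, (J ((0 : L), dd j)).2 (b i) = M i j :=
    ⟨fun i j => (J ((0 : L), dd j)).2 (b i), fun _ _ => rfl⟩
  -- expansion of J in coordinates
  have hw : ∀ w : L × Module.Dual ℝ L,
      J w = (∑ j, b.repr w.1 j • J (b j, (0 : Module.Dual ℝ L)))
            + ∑ j, w.2 (b j) • J ((0 : L), dd j) := by
    intro w
    have h1 : w = (∑ j, b.repr w.1 j • (b j, (0 : Module.Dual ℝ L)))
            + ∑ j, w.2 (b j) • ((0 : L), dd j) := by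
      apply Prod.ext
      · simp only [Prod.fst_add, Prod.fst_sum, Prod.smul_fst, smul_zero, Finset.sum_const_zero,
          add_zero, b.sum_repr]
      · apply LinearMap.ext; intro x
        simp only [Prod.snd_add, Prod.snd_sum, Prod.smul_snd, smul_zero, Finset.sum_const_zero,
          zero_add, LinearMap.add_apply, LinearMap.sum_apply, LinearMap.smul_apply, hddx,
          smul_eq_mul]
        conv_lhs => rw [← b.sum_repr x]
        rw [Fin.sum_univ_four]
        simp only [map_add, map_smul, smul_eq_mul]
        rw [Fin.sum_univ_four]
        ring
    conv_lhs => rw [h1]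
    rw [map_add, map_sum, map_sum]
    simp only [map_smul]
  have hJ1 : ∀ (w : L × Module.Dual ℝ L) (k : Fin 4),
      b.repr (J w).1 k = ∑ j, b.repr w.1 j * MA k j + ∑ j, w.2 (b j) * MP k j := by
    intro w k
    rw [hw w]
    simp only [Prod.fst_add, Prod.fst_sum, Prod.smul_fst, map_add, map_sum, map_smul,
      Finsupp.coe_add, Finsupp.add_apply, Finsupp.finset_sum_apply, Finsupp.smul_apply,
      smul_eq_mul, hMA, hMP]
  have hJ2 : ∀ (w : L × Module.Dual ℝ L) (k : Fin 4),
      (J w).2 (b k) = ∑ j, b.repr w.1 j * MS k j + ∑ j, w.2 (b j) * MD k j := by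
    intro w k
    rw [hw w]
    simp only [Prod.snd_add, Prod.snd_sum, Prod.smul_snd, LinearMap.add_apply,
      LinearMap.sum_apply, LinearMap.smul_apply, smul_eq_mul, hMS, hMD]
  -- skewness of J with respect to ctf
  have hsk : ∀ u v, ctf (J u) v = - ctf u (J v) := by
    intro u v
    have h := horth u (J v)
    rw [hJJ v] at h
    rw [← h]
    simp only [ctf, Prod.snd_neg, Prod.fst_neg, LinearMap.neg_apply, map_neg]
    ring
  have mP : ∀ i j : Fin 4, MP j i = - MP i j := by
    intro i j
    have h := hsk ((0 : L), dd i) ((0 : L), dd j)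
    simp only [ctf, hddx, hMP, map_zero, LinearMap.zero_apply] at h
    linarith
  have mS : ∀ i j : Fin 4, MS j i = - MS i j := by
    intro i j
    have h := hsk ((b i : L), (0 : Module.Dual ℝ L)) ((b j : L), (0 : Module.Dual ℝ L))
    simp only [ctf, hMS, map_zero, LinearMap.zero_apply] at h
    linarith
  have mD : ∀ i j : Fin 4, MD i j = - MA j i := by
    intro i j
    have h := hsk ((0 : L), dd j) ((b i : L), (0 : Module.Dual ℝ L))
    simp only [ctf, hddx, hMP, hMD, hMA, map_zero, LinearMap.zero_apply] at h
    linarith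
  have eN463 : MP 3 0 * MP 3 0 + MP 2 0 * MP 3 0 + MP 0 2 * MP 3 0 + (-1 : ℝ) * MP 0 0 * MP 3 3 + (-2 : ℝ) * MP 0 0 * MP 3 2 = 0 := by
    have hc := congrArg (fun w => b.repr w.1 3) (hnij ((0 : L), dd 0) ((0 : L), dd 2))
    simp only [nij, ctb, Prod.fst_add, Prod.fst_sub, Prod.snd_add, Prod.snd_sub, Prod.fst_neg, Prod.snd_neg,
      Prod.fst_zero, Prod.snd_zero, map_add, map_sub, map_neg, map_zero, map_smul,
      Finsupp.coe_add, Finsupp.coe_sub, Finsupp.coe_neg, Finsupp.add_apply, Finsupp.sub_apply,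
      Finsupp.neg_apply, Finsupp.zero_apply, LinearMap.add_apply, LinearMap.sub_apply,
      LinearMap.neg_apply, LinearMap.zero_apply, LinearMap.comp_apply, ad_apply,
      hJ1, hJ2, hbr, hddb, hMA, hMS, hMP, hMD, Module.Basis.repr_self, Finsupp.single_apply,
      Fin.sum_univ_four, smul_eq_mul, Finsupp.smul_apply, Finsupp.coe_smul, Fin.isValue, Fin.reduceEq, reduceIte,
      mul_zero, zero_mul, add_zero, zero_add, mul_one, one_mul, neg_neg, neg_zero, mul_neg, neg_mul] at hc
    linear_combination hc
  have eN452 : MP 2 0 * MP 2 0 + MP 1 0 * MP 2 0 + MP 0 1 * MP 3 0 + MP 0 1 * MP 2 0 + (-1 : ℝ) * MP 0 0 * MP 3 1 + (-1 : ℝ) * MP 0 0 * MP 2 2 + (-2 : ℝ) * MP 0 0 * MP 2 1 = 0 := by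
    have hc := congrArg (fun w => b.repr w.1 2) (hnij ((0 : L), dd 0) ((0 : L), dd 1))
    simp only [nij, ctb, Prod.fst_add, Prod.fst_sub, Prod.snd_add, Prod.snd_sub, Prod.fst_neg, Prod.snd_neg,
      Prod.fst_zero, Prod.snd_zero, map_add, map_sub, map_neg, map_zero, map_smul,
      Finsupp.coe_add, Finsupp.coe_sub, Finsupp.coe_neg, Finsupp.add_apply, Finsupp.sub_apply,
      Finsupp.neg_apply, Finsupp.zero_apply, LinearMap.add_apply, LinearMap.sub_apply,
      LinearMap.neg_apply, LinearMap.zero_apply, LinearMap.comp_apply, ad_apply,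
      hJ1, hJ2, hbr, hddb, hMA, hMS, hMP, hMD, Module.Basis.repr_self, Finsupp.single_apply,
      Fin.sum_univ_four, smul_eq_mul, Finsupp.smul_apply, Finsupp.coe_smul, Fin.isValue, Fin.reduceEq, reduceIte,
      mul_zero, zero_mul, add_zero, zero_add, mul_one, one_mul, neg_neg, neg_zero, mul_neg, neg_mul] at hc
    linear_combination hc
  have eN120 : (-1 : ℝ) * MP 0 0 * MS 2 1 + MP 0 0 * MS 1 2 + (-1 : ℝ) * MP 0 0 * MS 1 1 + MA 0 1 * MA 0 1 = 0 := by
    have hc := congrArg (fun w => b.repr w.1 0) (hnij ((b 1 : L), (0 : Module.Dual ℝ L)) ((b 2 : L), (0 : Module.Dual ℝ L)))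
    simp only [nij, ctb, Prod.fst_add, Prod.fst_sub, Prod.snd_add, Prod.snd_sub, Prod.fst_neg, Prod.snd_neg,
      Prod.fst_zero, Prod.snd_zero, map_add, map_sub, map_neg, map_zero, map_smul,
      Finsupp.coe_add, Finsupp.coe_sub, Finsupp.coe_neg, Finsupp.add_apply, Finsupp.sub_apply,
      Finsupp.neg_apply, Finsupp.zero_apply, LinearMap.add_apply, LinearMap.sub_apply,
      LinearMap.neg_apply, LinearMap.zero_apply, LinearMap.comp_apply, ad_apply,
      hJ1, hJ2, hbr, hddb, hMA, hMS, hMP, hMD, Module.Basis.repr_self, Finsupp.single_apply,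
      Fin.sum_univ_four, smul_eq_mul, Finsupp.smul_apply, Finsupp.coe_smul, Fin.isValue, Fin.reduceEq, reduceIte,
      mul_zero, zero_mul, add_zero, zero_add, mul_one, one_mul, neg_neg, neg_zero, mul_neg, neg_mul] at hc
    linear_combination hc
  have eN230 : (-1 : ℝ) * MP 0 0 * MS 3 2 + MP 0 0 * MS 2 3 + (-1 : ℝ) * MP 0 0 * MS 2 2 + MP 0 0 * MS 1 3 + MA 0 2 * MA 0 2 + (-1 : ℝ) * MA 0 1 * MA 0 3 = 0 := by
    have hc := congrArg (fun w => b.repr w.1 0) (hnij ((b 2 : L), (0 : Module.Dual ℝ L)) ((b 3 : L), (0 : Module.Dual ℝ L)))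
    simp only [nij, ctb, Prod.fst_add, Prod.fst_sub, Prod.snd_add, Prod.snd_sub, Prod.fst_neg, Prod.snd_neg,
      Prod.fst_zero, Prod.snd_zero, map_add, map_sub, map_neg, map_zero, map_smul,
      Finsupp.coe_add, Finsupp.coe_sub, Finsupp.coe_neg, Finsupp.add_apply, Finsupp.sub_apply,
      Finsupp.neg_apply, Finsupp.zero_apply, LinearMap.add_apply, LinearMap.sub_apply,
      LinearMap.neg_apply, LinearMap.zero_apply, LinearMap.comp_apply, ad_apply,
      hJ1, hJ2, hbr, hddb, hMA, hMS, hMP, hMD, Module.Basis.repr_self, Finsupp.single_apply,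
      Fin.sum_univ_four, smul_eq_mul, Finsupp.smul_apply, Finsupp.coe_smul, Fin.isValue, Fin.reduceEq, reduceIte,
      mul_zero, zero_mul, add_zero, zero_add, mul_one, one_mul, neg_neg, neg_zero, mul_neg, neg_mul] at hc
    linear_combination hc
  have eN341 : MP 1 0 * MD 3 0 + MP 1 0 * MD 2 0 + MA 2 3 * MP 0 0 + (-1 : ℝ) * MA 1 2 * MP 0 0 + (-1 : ℝ) * MA 0 3 * MP 2 0 + (-1 : ℝ) * MA 0 3 * MP 1 0 = 0 := by
    have hc := congrArg (fun w => b.repr w.1 1) (hnij ((b 3 : L), (0 : Module.Dual ℝ L)) ((0 : L), dd 0))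
    simp only [nij, ctb, Prod.fst_add, Prod.fst_sub, Prod.snd_add, Prod.snd_sub, Prod.fst_neg, Prod.snd_neg,
      Prod.fst_zero, Prod.snd_zero, map_add, map_sub, map_neg, map_zero, map_smul,
      Finsupp.coe_add, Finsupp.coe_sub, Finsupp.coe_neg, Finsupp.add_apply, Finsupp.sub_apply,
      Finsupp.neg_apply, Finsupp.zero_apply, LinearMap.add_apply, LinearMap.sub_apply,
      LinearMap.neg_apply, LinearMap.zero_apply, LinearMap.comp_apply, ad_apply,
      hJ1, hJ2, hbr, hddb, hMA, hMS, hMP, hMD, Module.Basis.repr_self, Finsupp.single_apply,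
      Fin.sum_univ_four, smul_eq_mul, Finsupp.smul_apply, Finsupp.coe_smul, Fin.isValue, Fin.reduceEq, reduceIte,
      mul_zero, zero_mul, add_zero, zero_add, mul_one, one_mul, neg_neg, neg_zero, mul_neg, neg_mul] at hc
    linear_combination hc
  have eN563 : MP 3 0 * MP 3 1 + (-1 : ℝ) * MP 2 2 * MP 3 0 + MP 2 1 * MP 3 0 + (-1 : ℝ) * MP 1 2 * MP 3 0 + MP 0 2 * MP 3 2 + 2 * MP 0 2 * MP 3 1 + (-1 : ℝ) * MP 0 1 * MP 3 3 + (-2 : ℝ) * MP 0 1 * MP 3 2 = 0 := by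
    have hc := congrArg (fun w => b.repr w.1 3) (hnij ((0 : L), dd 1) ((0 : L), dd 2))
    simp only [nij, ctb, Prod.fst_add, Prod.fst_sub, Prod.snd_add, Prod.snd_sub, Prod.fst_neg, Prod.snd_neg,
      Prod.fst_zero, Prod.snd_zero, map_add, map_sub, map_neg, map_zero, map_smul,
      Finsupp.coe_add, Finsupp.coe_sub, Finsupp.coe_neg, Finsupp.add_apply, Finsupp.sub_apply,
      Finsupp.neg_apply, Finsupp.zero_apply, LinearMap.add_apply, LinearMap.sub_apply,
      LinearMap.neg_apply, LinearMap.zero_apply, LinearMap.comp_apply, ad_apply,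
      hJ1, hJ2, hbr, hddb, hMA, hMS, hMP, hMD, Module.Basis.repr_self, Finsupp.single_apply,
      Fin.sum_univ_four, smul_eq_mul, Finsupp.smul_apply, Finsupp.coe_smul, Fin.isValue, Fin.reduceEq, reduceIte,
      mul_zero, zero_mul, add_zero, zero_add, mul_one, one_mul, neg_neg, neg_zero, mul_neg, neg_mul] at hc
    linear_combination hc
  have eN121 : (-1 : ℝ) * MP 1 0 * MS 2 1 + MP 1 0 * MS 1 2 + (-1 : ℝ) * MP 1 0 * MS 1 1 + MA 0 2 * MA 2 1 + (-1 : ℝ) * MA 0 1 * MA 2 2 + MA 0 1 * MA 1 1 = 0 := by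
    have hc := congrArg (fun w => b.repr w.1 1) (hnij ((b 1 : L), (0 : Module.Dual ℝ L)) ((b 2 : L), (0 : Module.Dual ℝ L)))
    simp only [nij, ctb, Prod.fst_add, Prod.fst_sub, Prod.snd_add, Prod.snd_sub, Prod.fst_neg, Prod.snd_neg,
      Prod.fst_zero, Prod.snd_zero, map_add, map_sub, map_neg, map_zero, map_smul,
      Finsupp.coe_add, Finsupp.coe_sub, Finsupp.coe_neg, Finsupp.add_apply, Finsupp.sub_apply,
      Finsupp.neg_apply, Finsupp.zero_apply, LinearMap.add_apply, LinearMap.sub_apply,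
      LinearMap.neg_apply, LinearMap.zero_apply, LinearMap.comp_apply, ad_apply,
      hJ1, hJ2, hbr, hddb, hMA, hMS, hMP, hMD, Module.Basis.repr_self, Finsupp.single_apply,
      Fin.sum_univ_four, smul_eq_mul, Finsupp.smul_apply, Finsupp.coe_smul, Fin.isValue, Fin.reduceEq, reduceIte,
      mul_zero, zero_mul, add_zero, zero_add, mul_one, one_mul, neg_neg, neg_zero, mul_neg, neg_mul] at hc
    linear_combination hc
  have eN252 : MP 2 0 * MD 2 1 + MP 2 0 * MD 1 1 + MA 3 2 * MP 0 1 + MA 2 2 * MP 2 0 + (-1 : ℝ) * MA 2 1 * MP 0 1 + MA 1 2 * MP 2 0 + (-1 : ℝ) * MA 0 2 * MP 3 1 + (-1 : ℝ) * MA 0 2 * MP 2 2 + (-2 : ℝ) * MA 0 2 * MP 2 1 = 0 := by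
    have hc := congrArg (fun w => b.repr w.1 2) (hnij ((b 2 : L), (0 : Module.Dual ℝ L)) ((0 : L), dd 1))
    simp only [nij, ctb, Prod.fst_add, Prod.fst_sub, Prod.snd_add, Prod.snd_sub, Prod.fst_neg, Prod.snd_neg,
      Prod.fst_zero, Prod.snd_zero, map_add, map_sub, map_neg, map_zero, map_smul,
      Finsupp.coe_add, Finsupp.coe_sub, Finsupp.coe_neg, Finsupp.add_apply, Finsupp.sub_apply,
      Finsupp.neg_apply, Finsupp.zero_apply, LinearMap.add_apply, LinearMap.sub_apply,
      LinearMap.neg_apply, LinearMap.zero_apply, LinearMap.comp_apply, ad_apply,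
      hJ1, hJ2, hbr, hddb, hMA, hMS, hMP, hMD, Module.Basis.repr_self, Finsupp.single_apply,
      Fin.sum_univ_four, smul_eq_mul, Finsupp.smul_apply, Finsupp.coe_smul, Fin.isValue, Fin.reduceEq, reduceIte,
      mul_zero, zero_mul, add_zero, zero_add, mul_one, one_mul, neg_neg, neg_zero, mul_neg, neg_mul] at hc
    linear_combination hc
  have eN363 : MP 3 0 * MD 3 2 + MP 3 0 * MD 2 2 + MA 3 3 * MP 3 0 + (-1 : ℝ) * MA 3 2 * MP 0 2 + MA 2 3 * MP 3 0 + (-1 : ℝ) * MA 0 3 * MP 3 3 + (-2 : ℝ) * MA 0 3 * MP 3 2 = 0 := by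
    have hc := congrArg (fun w => b.repr w.1 3) (hnij ((b 3 : L), (0 : Module.Dual ℝ L)) ((0 : L), dd 2))
    simp only [nij, ctb, Prod.fst_add, Prod.fst_sub, Prod.snd_add, Prod.snd_sub, Prod.fst_neg, Prod.snd_neg,
      Prod.fst_zero, Prod.snd_zero, map_add, map_sub, map_neg, map_zero, map_smul,
      Finsupp.coe_add, Finsupp.coe_sub, Finsupp.coe_neg, Finsupp.add_apply, Finsupp.sub_apply,
      Finsupp.neg_apply, Finsupp.zero_apply, LinearMap.add_apply, LinearMap.sub_apply,
      LinearMap.neg_apply, LinearMap.zero_apply, LinearMap.comp_apply, ad_apply,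
      hJ1, hJ2, hbr, hddb, hMA, hMS, hMP, hMD, Module.Basis.repr_self, Finsupp.single_apply,
      Fin.sum_univ_four, smul_eq_mul, Finsupp.smul_apply, Finsupp.coe_smul, Fin.isValue, Fin.reduceEq, reduceIte,
      mul_zero, zero_mul, add_zero, zero_add, mul_one, one_mul, neg_neg, neg_zero, mul_neg, neg_mul] at hc
    linear_combination hc
  have eN127 : (-1 : ℝ) * MS 2 1 * MD 3 0 + MS 1 2 * MD 3 0 + (-1 : ℝ) * MS 1 1 * MD 3 0 + (-2 : ℝ) * MA 0 2 * MS 3 1 + (-1 : ℝ) * MA 0 2 * MS 2 1 + 2 * MA 0 1 * MS 3 2 + MA 0 1 * MS 3 1 + MA 0 1 * MS 2 2 = 0 := by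
    have hc := congrArg (fun w => w.2 (b 3)) (hnij ((b 1 : L), (0 : Module.Dual ℝ L)) ((b 2 : L), (0 : Module.Dual ℝ L)))
    simp only [nij, ctb, Prod.fst_add, Prod.fst_sub, Prod.snd_add, Prod.snd_sub, Prod.fst_neg, Prod.snd_neg,
      Prod.fst_zero, Prod.snd_zero, map_add, map_sub, map_neg, map_zero, map_smul,
      Finsupp.coe_add, Finsupp.coe_sub, Finsupp.coe_neg, Finsupp.add_apply, Finsupp.sub_apply,
      Finsupp.neg_apply, Finsupp.zero_apply, LinearMap.add_apply, LinearMap.sub_apply,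
      LinearMap.neg_apply, LinearMap.zero_apply, LinearMap.comp_apply, ad_apply,
      hJ1, hJ2, hbr, hddb, hMA, hMS, hMP, hMD, Module.Basis.repr_self, Finsupp.single_apply,
      Fin.sum_univ_four, smul_eq_mul, Finsupp.smul_apply, Finsupp.coe_smul, Fin.isValue, Fin.reduceEq, reduceIte,
      mul_zero, zero_mul, add_zero, zero_add, mul_one, one_mul, neg_neg, neg_zero, mul_neg, neg_mul] at hc
    linear_combination hc
  have eN232 : (-1 : ℝ) * MP 2 0 * MS 3 2 + MP 2 0 * MS 2 3 + (-1 : ℝ) * MP 2 0 * MS 2 2 + MP 2 0 * MS 1 3 + MA 0 3 * MA 3 2 + (-1 : ℝ) * MA 0 3 * MA 2 1 + (-1 : ℝ) * MA 0 2 * MA 3 3 + MA 0 2 * MA 2 2 = 0 := by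
    have hc := congrArg (fun w => b.repr w.1 2) (hnij ((b 2 : L), (0 : Module.Dual ℝ L)) ((b 3 : L), (0 : Module.Dual ℝ L)))
    simp only [nij, ctb, Prod.fst_add, Prod.fst_sub, Prod.snd_add, Prod.snd_sub, Prod.fst_neg, Prod.snd_neg,
      Prod.fst_zero, Prod.snd_zero, map_add, map_sub, map_neg, map_zero, map_smul,
      Finsupp.coe_add, Finsupp.coe_sub, Finsupp.coe_neg, Finsupp.add_apply, Finsupp.sub_apply,
      Finsupp.neg_apply, Finsupp.zero_apply, LinearMap.add_apply, LinearMap.sub_apply,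
      LinearMap.neg_apply, LinearMap.zero_apply, LinearMap.comp_apply, ad_apply,
      hJ1, hJ2, hbr, hddb, hMA, hMS, hMP, hMD, Module.Basis.repr_self, Finsupp.single_apply,
      Fin.sum_univ_four, smul_eq_mul, Finsupp.smul_apply, Finsupp.coe_smul, Fin.isValue, Fin.reduceEq, reduceIte,
      mul_zero, zero_mul, add_zero, zero_add, mul_one, one_mul, neg_neg, neg_zero, mul_neg, neg_mul] at hc
    linear_combination hc
  have eN352 : MP 2 0 * MD 3 1 + MP 2 0 * MD 2 1 + MA 3 3 * MP 0 1 + MA 2 3 * MP 2 0 + (-1 : ℝ) * MA 2 2 * MP 0 1 + MA 1 3 * MP 2 0 + (-1 : ℝ) * MA 0 3 * MP 3 1 + (-1 : ℝ) * MA 0 3 * MP 2 2 + (-2 : ℝ) * MA 0 3 * MP 2 1 = 0 := by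
    have hc := congrArg (fun w => b.repr w.1 2) (hnij ((b 3 : L), (0 : Module.Dual ℝ L)) ((0 : L), dd 1))
    simp only [nij, ctb, Prod.fst_add, Prod.fst_sub, Prod.snd_add, Prod.snd_sub, Prod.fst_neg, Prod.snd_neg,
      Prod.fst_zero, Prod.snd_zero, map_add, map_sub, map_neg, map_zero, map_smul,
      Finsupp.coe_add, Finsupp.coe_sub, Finsupp.coe_neg, Finsupp.add_apply, Finsupp.sub_apply,
      Finsupp.neg_apply, Finsupp.zero_apply, LinearMap.add_apply, LinearMap.sub_apply,
      LinearMap.neg_apply, LinearMap.zero_apply, LinearMap.comp_apply, ad_apply,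
      hJ1, hJ2, hbr, hddb, hMA, hMS, hMP, hMD, Module.Basis.repr_self, Finsupp.single_apply,
      Fin.sum_univ_four, smul_eq_mul, Finsupp.smul_apply, Finsupp.coe_smul, Fin.isValue, Fin.reduceEq, reduceIte,
      mul_zero, zero_mul, add_zero, zero_add, mul_one, one_mul, neg_neg, neg_zero, mul_neg, neg_mul] at hc
    linear_combination hc
  have eJ34 : MP 3 3 * MD 3 0 + MP 3 2 * MD 2 0 + MP 3 1 * MD 1 0 + MP 3 0 * MD 0 0 + MA 3 3 * MP 3 0 + MA 3 2 * MP 2 0 + MA 3 1 * MP 1 0 + MA 3 0 * MP 0 0 = 0 := by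
    have hc := congrArg (fun w => b.repr w.1 3) (hJJ ((0 : L), dd 0))
    simp only [nij, ctb, Prod.fst_add, Prod.fst_sub, Prod.snd_add, Prod.snd_sub, Prod.fst_neg, Prod.snd_neg,
      Prod.fst_zero, Prod.snd_zero, map_add, map_sub, map_neg, map_zero, map_smul,
      Finsupp.coe_add, Finsupp.coe_sub, Finsupp.coe_neg, Finsupp.add_apply, Finsupp.sub_apply,
      Finsupp.neg_apply, Finsupp.zero_apply, LinearMap.add_apply, LinearMap.sub_apply,
      LinearMap.neg_apply, LinearMap.zero_apply, LinearMap.comp_apply, ad_apply,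
      hJ1, hJ2, hbr, hddb, hMA, hMS, hMP, hMD, Module.Basis.repr_self, Finsupp.single_apply,
      Fin.sum_univ_four, smul_eq_mul, Finsupp.smul_apply, Finsupp.coe_smul, Fin.isValue, Fin.reduceEq, reduceIte,
      mul_zero, zero_mul, add_zero, zero_add, mul_one, one_mul, neg_neg, neg_zero, mul_neg, neg_mul] at hc
    linear_combination hc
  have eJ24 : MP 2 3 * MD 3 0 + MP 2 2 * MD 2 0 + MP 2 1 * MD 1 0 + MP 2 0 * MD 0 0 + MA 2 3 * MP 3 0 + MA 2 2 * MP 2 0 + MA 2 1 * MP 1 0 + MA 2 0 * MP 0 0 = 0 := by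
    have hc := congrArg (fun w => b.repr w.1 2) (hJJ ((0 : L), dd 0))
    simp only [nij, ctb, Prod.fst_add, Prod.fst_sub, Prod.snd_add, Prod.snd_sub, Prod.fst_neg, Prod.snd_neg,
      Prod.fst_zero, Prod.snd_zero, map_add, map_sub, map_neg, map_zero, map_smul,
      Finsupp.coe_add, Finsupp.coe_sub, Finsupp.coe_neg, Finsupp.add_apply, Finsupp.sub_apply,
      Finsupp.neg_apply, Finsupp.zero_apply, LinearMap.add_apply, LinearMap.sub_apply,
      LinearMap.neg_apply, LinearMap.zero_apply, LinearMap.comp_apply, ad_apply,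
      hJ1, hJ2, hbr, hddb, hMA, hMS, hMP, hMD, Module.Basis.repr_self, Finsupp.single_apply,
      Fin.sum_univ_four, smul_eq_mul, Finsupp.smul_apply, Finsupp.coe_smul, Fin.isValue, Fin.reduceEq, reduceIte,
      mul_zero, zero_mul, add_zero, zero_add, mul_one, one_mul, neg_neg, neg_zero, mul_neg, neg_mul] at hc
    linear_combination hc
  have eJ22 : 1 + MP 2 3 * MS 3 2 + MP 2 2 * MS 2 2 + MP 2 1 * MS 1 2 + MP 2 0 * MS 0 2 + MA 2 3 * MA 3 2 + MA 2 2 * MA 2 2 + MA 1 2 * MA 2 1 + MA 0 2 * MA 2 0 = 0 := by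
    have hc := congrArg (fun w => b.repr w.1 2) (hJJ ((b 2 : L), (0 : Module.Dual ℝ L)))
    simp only [nij, ctb, Prod.fst_add, Prod.fst_sub, Prod.snd_add, Prod.snd_sub, Prod.fst_neg, Prod.snd_neg,
      Prod.fst_zero, Prod.snd_zero, map_add, map_sub, map_neg, map_zero, map_smul,
      Finsupp.coe_add, Finsupp.coe_sub, Finsupp.coe_neg, Finsupp.add_apply, Finsupp.sub_apply,
      Finsupp.neg_apply, Finsupp.zero_apply, LinearMap.add_apply, LinearMap.sub_apply,
      LinearMap.neg_apply, LinearMap.zero_apply, LinearMap.comp_apply, ad_apply,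
      hJ1, hJ2, hbr, hddb, hMA, hMS, hMP, hMD, Module.Basis.repr_self, Finsupp.single_apply,
      Fin.sum_univ_four, smul_eq_mul, Finsupp.smul_apply, Finsupp.coe_smul, Fin.isValue, Fin.reduceEq, reduceIte,
      mul_zero, zero_mul, add_zero, zero_add, mul_one, one_mul, neg_neg, neg_zero, mul_neg, neg_mul] at hc
    linear_combination hc
  have eJ00 : 1 + MP 0 3 * MS 3 0 + MP 0 2 * MS 2 0 + MP 0 1 * MS 1 0 + MP 0 0 * MS 0 0 + MA 0 3 * MA 3 0 + MA 0 2 * MA 2 0 + MA 0 1 * MA 1 0 + MA 0 0 * MA 0 0 = 0 := by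
    have hc := congrArg (fun w => b.repr w.1 0) (hJJ ((b 0 : L), (0 : Module.Dual ℝ L)))
    simp only [nij, ctb, Prod.fst_add, Prod.fst_sub, Prod.snd_add, Prod.snd_sub, Prod.fst_neg, Prod.snd_neg,
      Prod.fst_zero, Prod.snd_zero, map_add, map_sub, map_neg, map_zero, map_smul,
      Finsupp.coe_add, Finsupp.coe_sub, Finsupp.coe_neg, Finsupp.add_apply, Finsupp.sub_apply,
      Finsupp.neg_apply, Finsupp.zero_apply, LinearMap.add_apply, LinearMap.sub_apply,
      LinearMap.neg_apply, LinearMap.zero_apply, LinearMap.comp_apply, ad_apply,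
      hJ1, hJ2, hbr, hddb, hMA, hMS, hMP, hMD, Module.Basis.repr_self, Finsupp.single_apply,
      Fin.sum_univ_four, smul_eq_mul, Finsupp.smul_apply, Finsupp.coe_smul, Fin.isValue, Fin.reduceEq, reduceIte,
      mul_zero, zero_mul, add_zero, zero_add, mul_one, one_mul, neg_neg, neg_zero, mul_neg, neg_mul] at hc
    linear_combination hc
  have eJ01 : MP 0 3 * MS 3 1 + MP 0 2 * MS 2 1 + MP 0 1 * MS 1 1 + MP 0 0 * MS 0 1 + MA 0 3 * MA 3 1 + MA 0 2 * MA 2 1 + MA 0 1 * MA 1 1 + MA 0 0 * MA 0 1 = 0 := by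
    have hc := congrArg (fun w => b.repr w.1 0) (hJJ ((b 1 : L), (0 : Module.Dual ℝ L)))
    simp only [nij, ctb, Prod.fst_add, Prod.fst_sub, Prod.snd_add, Prod.snd_sub, Prod.fst_neg, Prod.snd_neg,
      Prod.fst_zero, Prod.snd_zero, map_add, map_sub, map_neg, map_zero, map_smul,
      Finsupp.coe_add, Finsupp.coe_sub, Finsupp.coe_neg, Finsupp.add_apply, Finsupp.sub_apply,
      Finsupp.neg_apply, Finsupp.zero_apply, LinearMap.add_apply, LinearMap.sub_apply,
      LinearMap.neg_apply, LinearMap.zero_apply, LinearMap.comp_apply, ad_apply,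
      hJ1, hJ2, hbr, hddb, hMA, hMS, hMP, hMD, Module.Basis.repr_self, Finsupp.single_apply,
      Fin.sum_univ_four, smul_eq_mul, Finsupp.smul_apply, Finsupp.coe_smul, Fin.isValue, Fin.reduceEq, reduceIte,
      mul_zero, zero_mul, add_zero, zero_add, mul_one, one_mul, neg_neg, neg_zero, mul_neg, neg_mul] at hc
    linear_combination hc
  have eJ31 : MP 3 3 * MS 3 1 + MP 3 2 * MS 2 1 + MP 3 1 * MS 1 1 + MP 3 0 * MS 0 1 + MA 3 1 * MA 3 3 + MA 2 1 * MA 3 2 + MA 1 1 * MA 3 1 + MA 0 1 * MA 3 0 = 0 := by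
    have hc := congrArg (fun w => b.repr w.1 3) (hJJ ((b 1 : L), (0 : Module.Dual ℝ L)))
    simp only [nij, ctb, Prod.fst_add, Prod.fst_sub, Prod.snd_add, Prod.snd_sub, Prod.fst_neg, Prod.snd_neg,
      Prod.fst_zero, Prod.snd_zero, map_add, map_sub, map_neg, map_zero, map_smul,
      Finsupp.coe_add, Finsupp.coe_sub, Finsupp.coe_neg, Finsupp.add_apply, Finsupp.sub_apply,
      Finsupp.neg_apply, Finsupp.zero_apply, LinearMap.add_apply, LinearMap.sub_apply,
      LinearMap.neg_apply, LinearMap.zero_apply, LinearMap.comp_apply, ad_apply,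
      hJ1, hJ2, hbr, hddb, hMA, hMS, hMP, hMD, Module.Basis.repr_self, Finsupp.single_apply,
      Fin.sum_univ_four, smul_eq_mul, Finsupp.smul_apply, Finsupp.coe_smul, Fin.isValue, Fin.reduceEq, reduceIte,
      mul_zero, zero_mul, add_zero, zero_add, mul_one, one_mul, neg_neg, neg_zero, mul_neg, neg_mul] at hc
    linear_combination hc
  have eJ14 : MP 1 3 * MD 3 0 + MP 1 2 * MD 2 0 + MP 1 1 * MD 1 0 + MP 1 0 * MD 0 0 + MA 1 3 * MP 3 0 + MA 1 2 * MP 2 0 + MA 1 1 * MP 1 0 + MA 1 0 * MP 0 0 = 0 := by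
    have hc := congrArg (fun w => b.repr w.1 1) (hJJ ((0 : L), dd 0))
    simp only [nij, ctb, Prod.fst_add, Prod.fst_sub, Prod.snd_add, Prod.snd_sub, Prod.fst_neg, Prod.snd_neg,
      Prod.fst_zero, Prod.snd_zero, map_add, map_sub, map_neg, map_zero, map_smul,
      Finsupp.coe_add, Finsupp.coe_sub, Finsupp.coe_neg, Finsupp.add_apply, Finsupp.sub_apply,
      Finsupp.neg_apply, Finsupp.zero_apply, LinearMap.add_apply, LinearMap.sub_apply,
      LinearMap.neg_apply, LinearMap.zero_apply, LinearMap.comp_apply, ad_apply,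
      hJ1, hJ2, hbr, hddb, hMA, hMS, hMP, hMD, Module.Basis.repr_self, Finsupp.single_apply,
      Fin.sum_univ_four, smul_eq_mul, Finsupp.smul_apply, Finsupp.coe_smul, Fin.isValue, Fin.reduceEq, reduceIte,
      mul_zero, zero_mul, add_zero, zero_add, mul_one, one_mul, neg_neg, neg_zero, mul_neg, neg_mul] at hc
    linear_combination hc
  have eJ11 : 1 + MP 1 3 * MS 3 1 + MP 1 2 * MS 2 1 + MP 1 1 * MS 1 1 + MP 1 0 * MS 0 1 + MA 1 3 * MA 3 1 + MA 1 2 * MA 2 1 + MA 1 1 * MA 1 1 + MA 0 1 * MA 1 0 = 0 := by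
    have hc := congrArg (fun w => b.repr w.1 1) (hJJ ((b 1 : L), (0 : Module.Dual ℝ L)))
    simp only [nij, ctb, Prod.fst_add, Prod.fst_sub, Prod.snd_add, Prod.snd_sub, Prod.fst_neg, Prod.snd_neg,
      Prod.fst_zero, Prod.snd_zero, map_add, map_sub, map_neg, map_zero, map_smul,
      Finsupp.coe_add, Finsupp.coe_sub, Finsupp.coe_neg, Finsupp.add_apply, Finsupp.sub_apply,
      Finsupp.neg_apply, Finsupp.zero_apply, LinearMap.add_apply, LinearMap.sub_apply,
      LinearMap.neg_apply, LinearMap.zero_apply, LinearMap.comp_apply, ad_apply,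
      hJ1, hJ2, hbr, hddb, hMA, hMS, hMP, hMD, Module.Basis.repr_self, Finsupp.single_apply,
      Fin.sum_univ_four, smul_eq_mul, Finsupp.smul_apply, Finsupp.coe_smul, Fin.isValue, Fin.reduceEq, reduceIte,
      mul_zero, zero_mul, add_zero, zero_add, mul_one, one_mul, neg_neg, neg_zero, mul_neg, neg_mul] at hc
    linear_combination hc
  exact corelemma MA MP MS MD mP mS mD eN463 eN452 eN120 eN230 eN341 eN563 eN121 eN252 eN363 eN127 eN232 eN352 eJ34 eJ24 eJ22 eJ00 eJ01 eJ31 eJ14 eJ11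
end

section
/- Let g = d₄ with brackets [e₀,e₁] = e₁, [e₀,e₂] = -e₂, [e₁,e₂] = e₃. The almost complex structure j on g determined by j(e₀) = e₁, j(e₁) = -e₀, j(e₃) = e₂, j(e₂) = -e₃ satisfies j² = -id and N_j ≡ 0; hence d₄ admits a complex structure. -/
/-- On `d₄` (`[e₀,e₁]=e₁`, `[e₀,e₂]=-e₂`, `[e₁,e₂]=e₃`), the almost complex
structure `j(e₀)=e₁, j(e₁)=-e₀, j(e₃)=e₂, j(e₂)=-e₃` satisfies `j² = -id` and
`N_j ≡ 0`; hence `d₄` admits a complex structure. -/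
theorem d4_admits_complex_structure
    (L : Type*) [LieRing L] [LieAlgebra ℝ L] [FiniteDimensional ℝ L]
    (b : Module.Basis (Fin 4) ℝ L)
    (h01 : ⁅b 0, b 1⁆ = b 1) (h02 : ⁅b 0, b 2⁆ = -b 2)
    (h12 : ⁅b 1, b 2⁆ = b 3)
    (hz : ∀ i j : Fin 4, i < j →
      (i, j) ≠ ((0 : Fin 4), (1 : Fin 4)) →
      (i, j) ≠ ((0 : Fin 4), (2 : Fin 4)) →
      (i, j) ≠ ((1 : Fin 4), (2 : Fin 4)) → ⁅b i, b j⁆ = 0)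
    (j : L →ₗ[ℝ] L)
    (hj0 : j (b 0) = b 1) (hj1 : j (b 1) = -b 0)
    (hj3 : j (b 3) = b 2) (hj2 : j (b 2) = -b 3) :
    (∀ x : L, j (j x) = -x) ∧
    (∀ x y : L, ⁅x, y⁆ + j ⁅j x, y⁆ + j ⁅x, j y⁆ - ⁅j x, j y⁆ = 0) := by
  -- full bracket table
  have h03 : ⁅b 0, b 3⁆ = 0 := hz 0 3 (by decide) (by decide) (by decide) (by decide)
  have h13 : ⁅b 1, b 3⁆ = 0 := hz 1 3 (by decide) (by decide) (by decide) (by decide)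
  have h23 : ⁅b 2, b 3⁆ = 0 := hz 2 3 (by decide) (by decide) (by decide) (by decide)
  have h10 : ⁅b 1, b 0⁆ = -b 1 := by rw [← lie_skew, h01]
  have h20 : ⁅b 2, b 0⁆ = b 2 := by rw [← lie_skew, h02, neg_neg]
  have h21 : ⁅b 2, b 1⁆ = -b 3 := by rw [← lie_skew, h12]
  have h30 : ⁅b 3, b 0⁆ = 0 := by rw [← lie_skew, h03, neg_zero]
  have h31 : ⁅b 3, b 1⁆ = 0 := by rw [← lie_skew, h13, neg_zero]
  have h32 : ⁅b 3, b 2⁆ = 0 := by rw [← lie_skew, h23, neg_zero]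
  have hd : ∀ i : Fin 4, ⁅b i, b i⁆ = 0 := fun i => lie_self _
  constructor
  · have hjj : j ∘ₗ j = -LinearMap.id := by
      apply b.ext
      intro i
      fin_cases i <;>
        simp [hj0, hj1, hj2, hj3]
    intro x
    have := LinearMap.congr_fun hjj x
    simpa using this
  · let A : L →ₗ[ℝ] L →ₗ[ℝ] L := LinearMap.mk₂ ℝ (fun x y => ⁅x, y⁆) add_lie smul_lie lie_add lie_smul
    let N : L →ₗ[ℝ] L →ₗ[ℝ] L :=
      A + (A.comp j).compr₂ j + (A.compl₂ j).compr₂ j - (A.comp j).compl₂ j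
    have hN : N = 0 := by
      apply b.ext
      intro i
      apply b.ext
      intro k
      fin_cases i <;> fin_cases k <;>
        simp [N, A, LieAlgebra.ad_apply, hj0, hj1, hj2, hj3,
          h01, h02, h03, h10, h12, h13, h20, h21, h23, h30, h31, h32,
          hd 0, hd 1, hd 2, hd 3]
    intro x y
    have := LinearMap.congr_fun (LinearMap.congr_fun hN x) y
    simpa [N, A, LieAlgebra.ad_apply, sub_eq_zero, add_assoc] using this
end

section
/- Let g be a real Lie algebra, B a complex-bilinear symmetric form on g^ℂ with B(σz, σw) = conj(B(z,w)), and q a complex Lie subalgebra of g^ℂ that is maximal B-isotropic and satisfies g^ℂ = q ⊕ σ(q). Then there is a unique endomorphism J of g with J² = -id whose complex-linear extension has q as its i-eigenspace, J satisfies N_J ≡ 0, and J is orthogonal with respect to the restriction of B to g, which is a real-valued nondegenerate symmetric bilinear form. -/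
open scoped TensorProduct
noncomputable def conjGC (L : Type*) [AddCommGroup L] [Module ℝ L] :
    ℂ ⊗[ℝ] L →ₗ[ℝ] ℂ ⊗[ℝ] L :=
  TensorProduct.map (Complex.conjAe.toLinearMap.restrictScalars ℝ) LinearMap.id

section Aux
variable (L : Type*) [AddCommGroup L] [Module ℝ L]

noncomputable def reT : ℂ ⊗[ℝ] L →ₗ[ℝ] L :=
  TensorProduct.lift ((LinearMap.lsmul ℝ L).comp Complex.reLm)
noncomputable def imT : ℂ ⊗[ℝ] L →ₗ[ℝ] L :=
  TensorProduct.lift ((LinearMap.lsmul ℝ L).comp Complex.imLm)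

@[simp] lemma conjGC_tmul (c : ℂ) (x : L) :
    conjGC L (c ⊗ₜ[ℝ] x) = (starRingEnd ℂ) c ⊗ₜ[ℝ] x := rfl

@[simp] lemma reT_tmul (c : ℂ) (x : L) : reT L (c ⊗ₜ[ℝ] x) = c.re • x := rfl
@[simp] lemma imT_tmul (c : ℂ) (x : L) : imT L (c ⊗ₜ[ℝ] x) = c.im • x := rfl

lemma conjGC_conjGC (z : ℂ ⊗[ℝ] L) : conjGC L (conjGC L z) = z := by
  induction z using TensorProduct.induction_on with
  | zero => simp
  | tmul c x => simp
  | add a b ha hb => simp [map_add, ha, hb]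

lemma conjGC_smul (α : ℂ) (z : ℂ ⊗[ℝ] L) :
    conjGC L (α • z) = (starRingEnd ℂ) α • conjGC L z := by
  induction z using TensorProduct.induction_on with
  | zero => simp
  | tmul c x => simp [TensorProduct.smul_tmul', map_mul]
  | add a b ha hb => simp [smul_add, map_add, ha, hb]

lemma tmul_decomp (z : ℂ ⊗[ℝ] L) :
    (1 : ℂ) ⊗ₜ[ℝ] reT L z + Complex.I ⊗ₜ[ℝ] imT L z = z := by
  induction z using TensorProduct.induction_on with
  | zero => simp
  | tmul c x =>
      simp only [reT_tmul, imT_tmul, TensorProduct.tmul_smul]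
      rw [TensorProduct.smul_tmul', TensorProduct.smul_tmul', ← TensorProduct.add_tmul]
      norm_num [Complex.re_add_im]
  | add a b ha hb =>
      rw [map_add, map_add, TensorProduct.tmul_add, TensorProduct.tmul_add,
        add_add_add_comm, ha, hb]

lemma smul_one_tmul (c : ℂ) (x : L) : c • ((1:ℂ) ⊗ₜ[ℝ] x) = c ⊗ₜ[ℝ] x := by
  rw [TensorProduct.smul_tmul', smul_eq_mul, mul_one]

lemma fixed_eq {z : ℂ ⊗[ℝ] L} (h : conjGC L z = z) : z = (1 : ℂ) ⊗ₜ[ℝ] reT L z := by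
  have hd := tmul_decomp L z
  have hσ : conjGC L z = (1 : ℂ) ⊗ₜ[ℝ] reT L z - Complex.I ⊗ₜ[ℝ] imT L z := by
    conv_lhs => rw [← hd]
    rw [map_add, conjGC_tmul, conjGC_tmul]
    simp [sub_eq_add_neg, ← TensorProduct.neg_tmul]
  have h2 : (2 * Complex.I) ⊗ₜ[ℝ] imT L z = 0 := by
    have := h.symm.trans hσ
    have h3 : Complex.I ⊗ₜ[ℝ] imT L z + Complex.I ⊗ₜ[ℝ] imT L z = 0 := by
      conv_lhs at this => rw [← hd]
      calc Complex.I ⊗ₜ[ℝ] imT L z + Complex.I ⊗ₜ[ℝ] imT L z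
          = 1 ⊗ₜ[ℝ] (reT L) z + Complex.I ⊗ₜ[ℝ] (imT L) z -
            (1 ⊗ₜ[ℝ] (reT L) z - Complex.I ⊗ₜ[ℝ] (imT L) z) := by abel
        _ = 0 := by rw [this, sub_self]
    rw [two_mul, TensorProduct.add_tmul]; exact h3
  have himz : imT L z = 0 := by
    have := congrArg (imT L) h2
    rw [imT_tmul, map_zero] at this
    simpa using this
  rw [← hd, himz, TensorProduct.tmul_zero, add_zero]
  simp

end Aux

section LieAux
variable (L : Type*) [LieRing L] [LieAlgebra ℝ L]

lemma lieC_add (z w w' : ℂ ⊗[ℝ] L) : ⁅z, w + w'⁆ = ⁅z, w⁆ + ⁅z, w'⁆ := lie_add z w w'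
lemma lieC_add' (z w w' : ℂ ⊗[ℝ] L) : ⁅z + w, w'⁆ = ⁅z, w'⁆ + ⁅w, w'⁆ := add_lie z w w'
lemma lieC_smul (c : ℂ) (z w : ℂ ⊗[ℝ] L) : ⁅z, c • w⁆ = c • ⁅z, w⁆ := lie_smul c z w
lemma lieC_smul' (c : ℂ) (z w : ℂ ⊗[ℝ] L) : ⁅c • z, w⁆ = c • ⁅z, w⁆ := smul_lie c z w
lemma lieC_zero (z : ℂ ⊗[ℝ] L) : ⁅z, (0 : ℂ ⊗[ℝ] L)⁆ = 0 := lie_zero z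
lemma lieC_zero' (z : ℂ ⊗[ℝ] L) : ⁅(0 : ℂ ⊗[ℝ] L), z⁆ = 0 := zero_lie z
lemma lieC_neg (z w : ℂ ⊗[ℝ] L) : ⁅z, -w⁆ = -⁅z, w⁆ := lie_neg z w
lemma lieC_neg' (z w : ℂ ⊗[ℝ] L) : ⁅-z, w⁆ = -⁅z, w⁆ := neg_lie z w

lemma conjGC_lie (z w : ℂ ⊗[ℝ] L) :
    conjGC L ⁅z, w⁆ = ⁅conjGC L z, conjGC L w⁆ := by
  induction z using TensorProduct.induction_on with
  | zero => simp only [lieC_zero', map_zero]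
  | add a b ha hb => simp only [lieC_add', map_add, ha, hb]
  | tmul a x =>
    induction w using TensorProduct.induction_on with
    | zero => simp only [lieC_zero, map_zero]
    | add c d hc hd => simp only [lieC_add, map_add, hc, hd]
    | tmul b y =>
      show conjGC L ((a*b) ⊗ₜ[ℝ] ⁅x,y⁆) = ⁅_,_⁆
      rw [conjGC_tmul, conjGC_tmul, conjGC_tmul]
      show _ = ((starRingEnd ℂ) a * (starRingEnd ℂ) b) ⊗ₜ[ℝ] ⁅x,y⁆
      rw [map_mul]

lemma one_tmul_lie (x y : L) :
    (1:ℂ) ⊗ₜ[ℝ] ⁅x, y⁆ = ⁅(1:ℂ) ⊗ₜ[ℝ] x, (1:ℂ) ⊗ₜ[ℝ] y⁆ := by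
  show _ = (1*1 : ℂ) ⊗ₜ[ℝ] ⁅x,y⁆
  rw [one_mul]

end LieAux

set_option maxHeartbeats 1000000 in
/-- Given a symmetric complex bilinear form `B` on `g^ℂ` compatible with the
conjugation `σ`, and a maximal `B`-isotropic complex Lie subalgebra `q` with
`g^ℂ = q ⊕ σ(q)`, there is a unique `J : g → g` with `J² = -id` whose
complex-linear extension has `q` as `i`-eigenspace; it satisfies `N_J ≡ 0` and
is orthogonal for the restriction of `B` to `g`, which is a real-valued
nondegenerate symmetric bilinear form. -/
theorem isotropic_subalgebra_gives_hermitian_structure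
    (L : Type*) [LieRing L] [LieAlgebra ℝ L] [FiniteDimensional ℝ L]
    (B : (ℂ ⊗[ℝ] L) →ₗ[ℂ] (ℂ ⊗[ℝ] L) →ₗ[ℂ] ℂ)
    (hsymm : ∀ z w : ℂ ⊗[ℝ] L, B z w = B w z)
    (hreal : ∀ z w : ℂ ⊗[ℝ] L,
      B (conjGC L z) (conjGC L w) = (starRingEnd ℂ) (B z w))
    (q : Submodule ℂ (ℂ ⊗[ℝ] L))
    (hsub : ∀ u ∈ q, ∀ v ∈ q, ⁅u, v⁆ ∈ q)
    (hiso : ∀ u ∈ q, ∀ v ∈ q, B u v = 0)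
    (hmax : ∀ p : Submodule ℂ (ℂ ⊗[ℝ] L), q ≤ p →
      (∀ u ∈ p, ∀ v ∈ p, B u v = 0) → p = q)
    (hsum : ∀ w : ℂ ⊗[ℝ] L, ∃ u ∈ q, ∃ v ∈ q, w = u + conjGC L v)
    (hind : ∀ u ∈ q, ∀ v ∈ q, u + conjGC L v = 0 → u = 0 ∧ v = 0) :
    (∃! J : L →ₗ[ℝ] L, (∀ x : L, J (J x) = -x) ∧
      Module.End.eigenspace (J.baseChange ℂ) Complex.I = q) ∧
    (∀ J : L →ₗ[ℝ] L, (∀ x : L, J (J x) = -x) →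
      Module.End.eigenspace (J.baseChange ℂ) Complex.I = q →
      (∀ x y : L, ⁅x, y⁆ + J ⁅J x, y⁆ + J ⁅x, J y⁆ - ⁅J x, J y⁆ = 0) ∧
      (∀ x y : L, B ((1 : ℂ) ⊗ₜ[ℝ] J x) ((1 : ℂ) ⊗ₜ[ℝ] J y) =
        B ((1 : ℂ) ⊗ₜ[ℝ] x) ((1 : ℂ) ⊗ₜ[ℝ] y))) ∧
    (∀ x y : L, (B ((1 : ℂ) ⊗ₜ[ℝ] x) ((1 : ℂ) ⊗ₜ[ℝ] y)).im = 0) ∧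
    (∀ x : L, (∀ y : L, B ((1 : ℂ) ⊗ₜ[ℝ] x) ((1 : ℂ) ⊗ₜ[ℝ] y) = 0) → x = 0) := by
  -- the real submodules q' and σ(q')
  set q' : Submodule ℝ (ℂ ⊗[ℝ] L) := q.restrictScalars ℝ with hq'
  set q'' : Submodule ℝ (ℂ ⊗[ℝ] L) := q'.map (conjGC L) with hq''
  have hmemq'' : ∀ z, z ∈ q'' ↔ ∃ v ∈ q, conjGC L v = z := by
    intro z
    constructor
    · rintro ⟨v, hv, rfl⟩; exact ⟨v, hv, rfl⟩
    · rintro ⟨v, hv, rfl⟩; exact ⟨v, hv, rfl⟩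
  have hcompl : IsCompl q' q'' := by
    constructor
    · rw [Submodule.disjoint_def]
      intro z hz1 hz2
      obtain ⟨v, hv, hvz⟩ := (hmemq'' z).1 hz2
      have h0 : (-z) + conjGC L v = 0 := by rw [hvz]; abel
      have := (hind (-z) (neg_mem hz1) v hv h0).1
      simpa [neg_eq_zero] using this
    · rw [codisjoint_iff_le_sup]
      intro z _
      obtain ⟨u, hu, v, hv, hz⟩ := hsum z
      exact Submodule.mem_sup.2 ⟨u, hu, conjGC L v, ⟨v, hv, rfl⟩, hz.symm⟩
  -- the projection onto q' along q''
  set P : (ℂ ⊗[ℝ] L) →ₗ[ℝ] (ℂ ⊗[ℝ] L) :=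
    q'.subtype ∘ₗ (q'.linearProjOfIsCompl q'' hcompl) with hPdef
  have hPmem : ∀ z, P z ∈ q := fun z => (q'.linearProjOfIsCompl q'' hcompl z).2
  have hPleft : ∀ z ∈ q, P z = z := by
    intro z hz
    show q'.subtype (q'.linearProjOfIsCompl q'' hcompl z) = z
    exact congrArg _ (Submodule.linearProjOfIsCompl_apply_left hcompl ⟨z, hz⟩)
  have hPright : ∀ z ∈ q'', P z = 0 := by
    intro z hz
    show q'.subtype (q'.projectionOnto q'' hcompl z) = 0
    rw [Submodule.linearProjOfIsCompl_apply_right' hcompl hz]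
    exact q'.subtype.map_zero
  have hPsub : ∀ z, z - P z ∈ q'' := by
    intro z
    obtain ⟨u, hu, v, hv, hz⟩ := hsum z
    have : P z = u := by
      rw [hz, map_add, hPleft u hu, hPright _ ((hmemq'' _).2 ⟨v, hv, rfl⟩), add_zero]
    rw [this, hz]
    exact (hmemq'' _).2 ⟨v, hv, by abel⟩
  have hPchar : ∀ z a, a ∈ q → z - a ∈ q'' → P z = a := by
    intro z a ha h
    have h1 : P (z - a) = 0 := hPright _ h
    rw [map_sub, hPleft a ha, sub_eq_zero] at h1
    exact h1
  have hq''smul : ∀ (c : ℂ) w, w ∈ q'' → c • w ∈ q'' := by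
    intro c w hw
    obtain ⟨v, hv, rfl⟩ := (hmemq'' w).1 hw
    refine (hmemq'' _).2 ⟨(starRingEnd ℂ) c • v, q.smul_mem _ hv, ?_⟩
    rw [conjGC_smul, Complex.conj_conj]
  have hPsmul : ∀ (c : ℂ) z, P (c • z) = c • P z := by
    intro c z
    refine hPchar _ _ (q.smul_mem c (hPmem z)) ?_
    have : c • z - c • P z = c • (z - P z) := by rw [smul_sub]
    rw [this]
    exact hq''smul c _ (hPsub z)
  -- the complexified almost complex structure
  set Jc : (ℂ ⊗[ℝ] L) →ₗ[ℝ] (ℂ ⊗[ℝ] L) :=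
    { toFun := fun z => Complex.I • P z - Complex.I • (z - P z)
      map_add' := by
        intro a b
        simp only [map_add]
        module
      map_smul' := by
        intro r a
        simp only [map_smul, RingHom.id_apply]
        module
    } with hJcdef
  have hJc : ∀ z, Jc z = Complex.I • P z - Complex.I • (z - P z) := fun _ => rfl
  have hJcq : ∀ z ∈ q, Jc z = Complex.I • z := by
    intro z hz
    rw [hJc, hPleft z hz, sub_self, smul_zero, sub_zero]
  have hJcq'' : ∀ z ∈ q'', Jc z = -(Complex.I • z) := by
    intro z hz
    rw [hJc, hPright z hz, smul_zero, sub_zero, zero_sub]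
  have hJcsmul : ∀ (c : ℂ) z, Jc (c • z) = c • Jc z := by
    intro c z
    rw [hJc, hJc, hPsmul]
    module
  have hJcJc : ∀ z, Jc (Jc z) = -z := by
    intro z
    rw [hJc z, map_sub, hJcsmul, hJcsmul, hJcq _ (hPmem z), hJcq'' _ (hPsub z),
      smul_neg, smul_smul, smul_smul, Complex.I_mul_I]
    module
  have hPσ : ∀ z, P (conjGC L z) = conjGC L (z - P z) := by
    intro z
    refine hPchar _ _ ?_ ?_
    · obtain ⟨v, hv, hveq⟩ := (hmemq'' _).1 (hPsub z)
      rw [← hveq, conjGC_conjGC]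
      exact hv
    · have he : conjGC L z - conjGC L (z - P z) = conjGC L (P z) := by
        rw [map_sub]; abel
      rw [he]
      exact (hmemq'' _).2 ⟨P z, hPmem z, rfl⟩
  have hσJc : ∀ z, conjGC L (Jc z) = Jc (conjGC L z) := by
    intro z
    rw [hJc z, hJc (conjGC L z), hPσ z, map_sub, conjGC_smul, conjGC_smul, Complex.conj_I,
      map_sub]
    module
  -- the real structure map ι
  set ι : L →ₗ[ℝ] ℂ ⊗[ℝ] L := TensorProduct.mk ℝ ℂ L 1 with hιdef
  have hι : ∀ x, ι x = (1 : ℂ) ⊗ₜ[ℝ] x := fun _ => rfl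
  have hιinj : ∀ x y : L, ι x = ι y → x = y := by
    intro x y h
    have := congrArg (reT L) h
    simpa [hι] using this
  have hσι : ∀ x, conjGC L (ι x) = ι x := by
    intro x
    rw [hι, conjGC_tmul, map_one]
  -- the almost complex structure J
  set J : L →ₗ[ℝ] L := reT L ∘ₗ (Jc ∘ₗ ι) with hJdef
  have hιJ : ∀ x, ι (J x) = Jc (ι x) := by
    intro x
    have hfix : conjGC L (Jc (ι x)) = Jc (ι x) := by rw [hσJc, hσι]
    have := fixed_eq L hfix
    rw [hι]
    exact this.symm
  have hJJ : ∀ x, J (J x) = -x := by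
    intro x
    apply hιinj
    rw [hιJ, hιJ, hJcJc, map_neg]
  -- base change of J agrees with Jc
  have hbase : ∀ z, (J.baseChange ℂ) z = Jc z := by
    intro z
    induction z using TensorProduct.induction_on with
    | zero => simp
    | add a b ha hb => rw [map_add, map_add, ha, hb]
    | tmul c x =>
      rw [LinearMap.baseChange_tmul]
      calc (c : ℂ) ⊗ₜ[ℝ] (J x) = c • ((1:ℂ) ⊗ₜ[ℝ] J x) := (smul_one_tmul L c (J x)).symm
        _ = c • (Jc (ι x)) := by rw [← hι, hιJ]
        _ = Jc (c • ((1:ℂ) ⊗ₜ[ℝ] x)) := by rw [hJcsmul, hι]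
        _ = Jc (c ⊗ₜ[ℝ] x) := by rw [smul_one_tmul]
  -- the eigenspace property
  have heig : Module.End.eigenspace (J.baseChange ℂ) Complex.I = q := by
    ext z
    rw [Module.End.mem_eigenspace_iff, hbase]
    constructor
    · intro h
      have h2 : Complex.I • (z - P z) + Complex.I • (z - P z) = 0 := by
        rw [hJc z] at h
        calc Complex.I • (z - P z) + Complex.I • (z - P z)
            = Complex.I • z - (Complex.I • P z - Complex.I • (z - P z)) := by module
          _ = 0 := by rw [← h, sub_self]
      have h3 : (2 : ℂ) • (Complex.I • (z - P z)) = 0 := by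
        rw [two_smul]; exact h2
      have h4 : Complex.I • (z - P z) = 0 := by
        rcases smul_eq_zero.1 h3 with h | h
        · exact absurd h two_ne_zero
        · exact h
      have h5 : z - P z = 0 := by
        rcases smul_eq_zero.1 h4 with h | h
        · exact absurd h Complex.I_ne_zero
        · exact h
      rw [sub_eq_zero] at h5
      rw [h5]
      exact hPmem z
    · intro hz
      exact hJcq z hz
  -- base change of any real map commutes with conjugation
  have hcommσ : ∀ (J' : L →ₗ[ℝ] L) (z : ℂ ⊗[ℝ] L),
      (J'.baseChange ℂ) (conjGC L z) = conjGC L ((J'.baseChange ℂ) z) := by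
    intro J' z
    induction z using TensorProduct.induction_on with
    | zero => simp
    | add a b ha hb => simp only [map_add, ha, hb]
    | tmul c x => rw [conjGC_tmul, LinearMap.baseChange_tmul, LinearMap.baseChange_tmul,
        conjGC_tmul]
  -- uniqueness of J
  have huniq : ∀ J' : L →ₗ[ℝ] L,
      Module.End.eigenspace (J'.baseChange ℂ) Complex.I = q → J' = J := by
    intro J' heq
    have hq : ∀ z ∈ q, (J'.baseChange ℂ) z = Complex.I • z := by
      intro z hz
      exact Module.End.mem_eigenspace_iff.1 (heq ▸ hz)
    have hbc : ∀ z, (J'.baseChange ℂ) z = Jc z := by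
      intro z
      obtain ⟨w, hw, hwz⟩ := (hmemq'' _).1 (hPsub z)
      have h1 : (J'.baseChange ℂ) (P z) = Complex.I • P z := hq _ (hPmem z)
      have h2 : (J'.baseChange ℂ) (z - P z) = -(Complex.I • (z - P z)) := by
        rw [← hwz, hcommσ, hq w hw, conjGC_smul, Complex.conj_I]
        module
      have h3 : (J'.baseChange ℂ) z
          = (J'.baseChange ℂ) (P z) + (J'.baseChange ℂ) (z - P z) := by
        rw [← map_add]
        congr 1
        abel
      rw [h3, h1, h2, hJc]
      module
    ext x
    apply hιinj
    have h4 : (J'.baseChange ℂ) (ι x) = ι (J' x) := by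
      rw [hι, LinearMap.baseChange_tmul, hι]
    rw [hιJ, ← h4, hbc]
  -- the bracket of two conjugates
  have hbrackq'' : ∀ z ∈ q'', ∀ w ∈ q'', ⁅z, w⁆ ∈ q'' := by
    intro z hz w hw
    obtain ⟨u, hu, rfl⟩ := (hmemq'' z).1 hz
    obtain ⟨v, hv, rfl⟩ := (hmemq'' w).1 hw
    refine (hmemq'' _).2 ⟨⁅u, v⁆, hsub u hu v hv, ?_⟩
    rw [conjGC_lie]
  -- vanishing of the complexified Nijenhuis tensor
  have hNcase : ∀ z w, (z ∈ q ∨ z ∈ q'') → (w ∈ q ∨ w ∈ q'') →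
      ⁅z, w⁆ + Jc ⁅Jc z, w⁆ + Jc ⁅z, Jc w⁆ - ⁅Jc z, Jc w⁆ = 0 := by
    rintro z w (hz | hz) (hw | hw)
    · simp only [hJcq z hz, hJcq w hw, lieC_smul, lieC_smul', hJcsmul,
        hJcq _ (hsub z hz w hw), smul_smul, Complex.I_mul_I, neg_one_smul]
      abel
    · simp only [hJcq z hz, hJcq'' w hw, lieC_smul, lieC_smul', lieC_neg, lieC_neg',
        map_neg, hJcsmul, smul_neg, smul_smul, Complex.I_mul_I, neg_one_smul, neg_neg]
      abel
    · simp only [hJcq'' z hz, hJcq w hw, lieC_smul, lieC_smul', lieC_neg, lieC_neg',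
        map_neg, hJcsmul, smul_neg, smul_smul, Complex.I_mul_I, neg_one_smul, neg_neg]
      abel
    · simp only [hJcq'' z hz, hJcq'' w hw, hJcq'' _ (hbrackq'' z hz w hw), lieC_smul,
        lieC_smul', lieC_neg, lieC_neg', map_neg, hJcsmul, smul_neg, smul_smul,
        Complex.I_mul_I, neg_one_smul, neg_neg]
      abel
  have hNc : ∀ z w : ℂ ⊗[ℝ] L,
      ⁅z, w⁆ + Jc ⁅Jc z, w⁆ + Jc ⁅z, Jc w⁆ - ⁅Jc z, Jc w⁆ = 0 := by
    intro z w
    obtain ⟨u, hu, v, hv, rfl⟩ := hsum z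
    obtain ⟨u', hu', v', hv', rfl⟩ := hsum w
    have hv2 : conjGC L v ∈ q'' := (hmemq'' _).2 ⟨v, hv, rfl⟩
    have hv2' : conjGC L v' ∈ q'' := (hmemq'' _).2 ⟨v', hv', rfl⟩
    have e1 := hNcase u u' (Or.inl hu) (Or.inl hu')
    have e2 := hNcase u (conjGC L v') (Or.inl hu) (Or.inr hv2')
    have e3 := hNcase (conjGC L v) u' (Or.inr hv2) (Or.inl hu')
    have e4 := hNcase (conjGC L v) (conjGC L v') (Or.inr hv2) (Or.inr hv2')
    simp only [lieC_add, lieC_add', map_add] at *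
    linear_combination (norm := module) e1 + e2 + e3 + e4
  -- B-orthogonality of Jc
  have hBq'' : ∀ z ∈ q'', ∀ w ∈ q'', B z w = 0 := by
    intro z hz w hw
    obtain ⟨u, hu, rfl⟩ := (hmemq'' z).1 hz
    obtain ⟨v, hv, rfl⟩ := (hmemq'' w).1 hw
    rw [hreal, hiso u hu v hv, map_zero]
  have hBJcase : ∀ z w, (z ∈ q ∨ z ∈ q'') → (w ∈ q ∨ w ∈ q'') →
      B (Jc z) (Jc w) = B z w := by
    rintro z w (hz | hz) (hw | hw)
    · rw [hJcq z hz, hJcq w hw, hiso z hz w hw, map_smul, map_smul, LinearMap.smul_apply,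
        hiso z hz w hw, smul_zero, smul_zero]
    · simp only [hJcq z hz, hJcq'' w hw, map_smul, map_neg, LinearMap.smul_apply,
        LinearMap.neg_apply, smul_neg, smul_smul, Complex.I_mul_I, neg_one_smul, neg_neg]
    · simp only [hJcq'' z hz, hJcq w hw, map_smul, map_neg, LinearMap.smul_apply,
        LinearMap.neg_apply, smul_neg, smul_smul, Complex.I_mul_I, neg_one_smul, neg_neg]
    · simp only [hJcq'' z hz, hJcq'' w hw, map_smul, map_neg, LinearMap.smul_apply,
        LinearMap.neg_apply, hBq'' z hz w hw, smul_zero, neg_zero]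
  have hBJ : ∀ z w : ℂ ⊗[ℝ] L, B (Jc z) (Jc w) = B z w := by
    intro z w
    obtain ⟨u, hu, v, hv, rfl⟩ := hsum z
    obtain ⟨u', hu', v', hv', rfl⟩ := hsum w
    have hv2 : conjGC L v ∈ q'' := (hmemq'' _).2 ⟨v, hv, rfl⟩
    have hv2' : conjGC L v' ∈ q'' := (hmemq'' _).2 ⟨v', hv', rfl⟩
    have e1 := hBJcase u u' (Or.inl hu) (Or.inl hu')
    have e2 := hBJcase u (conjGC L v') (Or.inl hu) (Or.inr hv2')
    have e3 := hBJcase (conjGC L v) u' (Or.inr hv2) (Or.inl hu')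
    have e4 := hBJcase (conjGC L v) (conjGC L v') (Or.inr hv2) (Or.inr hv2')
    simp only [map_add, LinearMap.add_apply] at *
    linear_combination e1 + e2 + e3 + e4
  -- the real Nijenhuis tensor vanishes
  have hN : ∀ x y : L, ⁅x, y⁆ + J ⁅J x, y⁆ + J ⁅x, J y⁆ - ⁅J x, J y⁆ = 0 := by
    intro x y
    apply hιinj _ 0
    rw [map_zero, map_sub, map_add, map_add]
    have l1 : ∀ a b : L, ι ⁅a, b⁆ = ⁅ι a, ι b⁆ := by
      intro a b
      rw [hι, hι, hι, one_tmul_lie]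
    rw [l1 x y, hιJ ⁅J x, y⁆, hιJ ⁅x, J y⁆, l1 (J x) y, l1 x (J y), l1 (J x) (J y), hιJ x, hιJ y]
    exact hNc (ι x) (ι y)
  -- orthogonality of J
  have horth : ∀ x y : L, B ((1 : ℂ) ⊗ₜ[ℝ] J x) ((1 : ℂ) ⊗ₜ[ℝ] J y) =
      B ((1 : ℂ) ⊗ₜ[ℝ] x) ((1 : ℂ) ⊗ₜ[ℝ] y) := by
    intro x y
    have h1 : (1 : ℂ) ⊗ₜ[ℝ] J x = Jc ((1 : ℂ) ⊗ₜ[ℝ] x) := hιJ x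
    have h2 : (1 : ℂ) ⊗ₜ[ℝ] J y = Jc ((1 : ℂ) ⊗ₜ[ℝ] y) := hιJ y
    rw [h1, h2, hBJ]
  refine ⟨⟨J, ⟨hJJ, heig⟩, fun J' hJ' => huniq J' hJ'.2⟩, ?_, ?_, ?_⟩
  · intro J' _ h2
    have : J' = J := huniq J' h2
    subst this
    exact ⟨hN, horth⟩
  · intro x y
    have h := hreal ((1 : ℂ) ⊗ₜ[ℝ] x) ((1 : ℂ) ⊗ₜ[ℝ] y)
    rw [conjGC_tmul, conjGC_tmul, map_one] at h
    have := Complex.conj_eq_iff_im.1 h.symm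
    exact this
  · intro x hx
    set z : ℂ ⊗[ℝ] L := (1 : ℂ) ⊗ₜ[ℝ] x with hzdef
    have hBall : ∀ w : ℂ ⊗[ℝ] L, B z w = 0 := by
      intro w
      induction w using TensorProduct.induction_on with
      | zero => simp
      | add a b ha hb => rw [map_add, ha, hb, add_zero]
      | tmul c y =>
          rw [← smul_one_tmul, map_smul, hx y, smul_zero]
    set p : Submodule ℂ (ℂ ⊗[ℝ] L) := q ⊔ Submodule.span ℂ {z} with hpdef
    have hqp : q ≤ p := le_sup_left
    have hpiso : ∀ u ∈ p, ∀ v ∈ p, B u v = 0 := by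
      intro u hu v hv
      rw [hpdef] at hu hv
      obtain ⟨u1, hu1, u2, hu2, rfl⟩ := Submodule.mem_sup.1 hu
      obtain ⟨v1, hv1, v2, hv2, rfl⟩ := Submodule.mem_sup.1 hv
      obtain ⟨c, rfl⟩ := Submodule.mem_span_singleton.1 hu2
      obtain ⟨d, rfl⟩ := Submodule.mem_span_singleton.1 hv2
      have hBz1 : B z v1 = 0 := hBall v1
      have hB1z : B u1 z = 0 := by rw [hsymm, hBall]
      have hBzz : B z z = 0 := hBall z
      simp only [map_add, map_smul, LinearMap.add_apply, LinearMap.smul_apply,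
        hiso u1 hu1 v1 hv1, hB1z, hBz1, hBzz, smul_zero, add_zero, zero_add]
    have hpq : p = q := hmax p hqp hpiso
    have hzq : z ∈ q := by
      rw [← hpq]
      exact Submodule.mem_sup_right (Submodule.mem_span_singleton_self z)
    have hz0 : z = 0 := by
      have hσz : conjGC L z = z := by
        rw [hzdef, ← hι]
        exact hσι x
      have h0 : z + conjGC L (-z) = 0 := by
        rw [map_neg, hσz]
        abel
      exact (hind z hzq (-z) (neg_mem hzq) h0).1
    have := congrArg (reT L) hz0
    rw [hzdef] at this
    simpa using this
end
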